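/- arXiv:0910.0610 — 3 statements merged into one kernel-verified Lean document; each statement's English description precedes it below -/
import Mathlib

section
/- Let d ≥ 3, W > 0, X > 0, let 𝒲 = {w ∈ ℝ^d : ‖w‖_1 ≤ W} and 𝒳 = {x ∈ ℝ^d : ‖x‖_∞ ≤ X}. Let l : ℝ × 𝒴 → ℝ be a loss function that is ρ-Lipschitz in its first argument and let 𝒟 be a probability distribution over 𝒳 × 𝒴 (with suitable integrability so that the risk L(w) = E_{(x,y)∼𝒟}[l(⟨w,x⟩,y)] is defined on 𝒲). Then the empirical risk minimizer ŵ over 𝒲, computed from n i.i.d. examples from 𝒟, satisfies E[L(ŵ) − min_{w ∈ 𝒲} L(w)] ≤ C · ρ · X · W · √(ln(d)/n) for a universal constant C > 0 (independent of d, n, W, X, ρ, 𝒟). -/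
open scoped BigOperators
open MeasureTheory Finset


lemma mp_eval {ι : Type*} [Fintype ι] {α : ι → Type*} [∀ i, MeasurableSpace (α i)]
    (μ : ∀ i, Measure (α i)) [∀ i, IsProbabilityMeasure (μ i)] (i : ι) :
    MeasurePreserving (fun f : ∀ j, α j => f i) (Measure.pi μ) (μ i) := by
  classical
  refine ⟨measurable_pi_apply i, ?_⟩
  ext s hs
  rw [Measure.map_apply (measurable_pi_apply i) hs]
  have : (fun f : ∀ j, α j => f i) ⁻¹' s = Set.pi Set.univ (Function.update (fun j => Set.univ) i s) := by
    ext f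
    simp [Function.eval, Set.mem_pi]
    constructor
    · intro hf j
      by_cases hj : j = i
      · subst hj; simpa using hf
      · simp [Function.update_of_ne hj]
    · intro hf
      have := hf i
      simpa using this
  rw [this, Measure.pi_pi]
  rw [Finset.prod_eq_single_of_mem i (Finset.mem_univ i)]
  · simp
  · intro j _ hj
    simp [Function.update_of_ne hj]

lemma aesm_sup' {α β : Type*} [MeasurableSpace β] {μ : Measure β}
    (N : Finset α) (hN : N.Nonempty) (F : α → β → ℝ)
    (h : ∀ v ∈ N, AEStronglyMeasurable (F v) μ) :
    AEStronglyMeasurable (fun x => N.sup' hN fun v => F v x) μ := by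
  classical
  revert h
  induction hN using Finset.Nonempty.cons_induction with
  | singleton a => intro h; simpa using h a (by simp)
  | cons a s ha hs ih =>
    intro h
    have heq : (fun x => (Finset.cons a s ha).sup' (Finset.cons_nonempty ha) fun v => F v x)
        = fun x => F a x ⊔ s.sup' hs (fun v => F v x) := by
      funext x; rw [Finset.sup'_cons]
    rw [heq]
    exact (h a (by simp)).sup (ih fun v hv => h v (by simp [hv]))

lemma sup'_add_const {α : Type*} (N : Finset α) (hN : N.Nonempty) (F : α → ℝ) (c : ℝ) :
    N.sup' hN (fun v => F v + c) = N.sup' hN F + c := by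
  apply le_antisymm
  · exact Finset.sup'_le _ _ fun v hv => add_le_add_left (Finset.le_sup' F hv) c
  · obtain ⟨v, hv, hveq⟩ := Finset.exists_mem_eq_sup' hN F
    rw [hveq]
    exact Finset.le_sup' (fun v => F v + c) hv

lemma sup'_add_le {α : Type*} (N : Finset α) (hN : N.Nonempty) (F G : α → ℝ) :
    N.sup' hN (fun v => F v + G v) ≤ N.sup' hN F + N.sup' hN G :=
  Finset.sup'_le _ _ fun v hv => add_le_add (Finset.le_sup' F hv) (Finset.le_sup' G hv)

lemma abs_sup'_le {α : Type*} (N : Finset α) (hN : N.Nonempty) (F : α → ℝ) (c : ℝ)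
    (h : ∀ v ∈ N, |F v| ≤ c) : |N.sup' hN F| ≤ c := by
  obtain ⟨v0, hv0, hv0eq⟩ := Finset.exists_mem_eq_sup' hN F
  rw [abs_le]
  constructor
  · rw [hv0eq]; exact (abs_le.mp (h v0 hv0)).1
  · exact Finset.sup'_le _ _ fun v hv => (abs_le.mp (h v hv)).2

lemma integral_comp_mp {α β : Type*} [MeasurableSpace α] [MeasurableSpace β]
    {μ : Measure α} {ν : Measure β} {T : α → β} (hT : MeasurePreserving T μ ν)
    {f : β → ℝ} (hf : AEStronglyMeasurable f ν) :
    ∫ x, f (T x) ∂μ = ∫ y, f y ∂ν := by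
  rw [← hT.map_eq] at hf
  rw [← integral_map hT.measurable.aemeasurable hf, hT.map_eq]

lemma ae_comp_mp {α β : Type*} [MeasurableSpace α] [MeasurableSpace β]
    {μ : Measure α} {ν : Measure β} {T : α → β} (hT : MeasurePreserving T μ ν)
    {p : β → Prop} (hmeas : MeasurableSet {y | p y}) (hp : ∀ᵐ y ∂ν, p y) :
    ∀ᵐ x ∂μ, p (T x) := by
  rw [← hT.map_eq] at hp
  exact (ae_map_iff hT.measurable.aemeasurable hmeas).mp hp

lemma integrable_comp_mp {α β : Type*} [MeasurableSpace α] [MeasurableSpace β]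
    {μ : Measure α} {ν : Measure β} {T : α → β} (hT : MeasurePreserving T μ ν)
    {f : β → ℝ} (hf : Integrable f ν) :
    Integrable (fun x => f (T x)) μ :=
  (hT.integrable_comp hf.aestronglyMeasurable).mpr hf

lemma integrable_of_bound {β : Type*} [MeasurableSpace β] {μ : Measure β}
    [IsProbabilityMeasure μ] {f : β → ℝ} (hf : AEStronglyMeasurable f μ) (c : ℝ)
    (h : ∀ᵐ x ∂μ, |f x| ≤ c) : Integrable f μ := by
  refine Integrable.mono' (integrable_const c) hf ?_
  filter_upwards [h] with x hx
  simpa using hx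


noncomputable def sg (b : Bool) : ℝ := if b then -1 else 1

lemma sg_abs (b : Bool) : |sg b| = 1 := by cases b <;> simp [sg]

lemma sg_not (b : Bool) : sg (!b) = - sg b := by cases b <;> simp [sg]

/-- Two point contraction core. -/
lemma two_point {α : Type*} (N : Finset α) (hN : N.Nonempty) (a f g : α → ℝ)
    (h : ∀ i ∈ N, ∀ j ∈ N, f i - f j ≤ |g i - g j|) :
    N.sup' hN (fun i => a i + f i) + N.sup' hN (fun i => a i - f i) ≤
      N.sup' hN (fun i => a i + g i) + N.sup' hN (fun i => a i - g i) := by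
  obtain ⟨i, hi, hieq⟩ := Finset.exists_mem_eq_sup' hN (fun i => a i + f i)
  obtain ⟨j, hj, hjeq⟩ := Finset.exists_mem_eq_sup' hN (fun i => a i - f i)
  rw [hieq, hjeq]
  rcases abs_cases (g i - g j) with ⟨he, _⟩ | ⟨he, _⟩
  · have h1 : a i + f i + (a j - f j) ≤ (a i + g i) + (a j - g j) := by
      have := h i hi j hj; rw [he] at this; linarith
    refine h1.trans (add_le_add (Finset.le_sup' (fun i => a i + g i) hi) (Finset.le_sup' (fun i => a i - g i) hj))
  · have h1 : a i + f i + (a j - f j) ≤ (a j + g j) + (a i - g i) := by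
      have := h i hi j hj; rw [he] at this; linarith
    refine h1.trans (add_le_add (Finset.le_sup' (fun i => a i + g i) hj) (Finset.le_sup' (fun i => a i - g i) hi))

/-- Ledoux-Talagrand contraction, finite Rademacher-sum version. -/
lemma contraction {α : Type*} (N : Finset α) (hN : N.Nonempty) :
    ∀ (n : ℕ) (A : α → ℝ) (φ u : Fin n → α → ℝ),
    (∀ t, ∀ i ∈ N, ∀ j ∈ N, φ t i - φ t j ≤ |u t i - u t j|) →
    ∑ σ : Fin n → Bool, N.sup' hN (fun v => A v + ∑ t, sg (σ t) * φ t v) ≤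
      ∑ σ : Fin n → Bool, N.sup' hN (fun v => A v + ∑ t, sg (σ t) * u t v) := by
  intro n
  induction n with
  | zero => intro A φ u h; simp
  | succ n ih =>
    intro A φ u h
    have key : ∀ (ψ : Fin (n+1) → α → ℝ),
        ∑ σ : Fin (n+1) → Bool, N.sup' hN (fun v => A v + ∑ t, sg (σ t) * ψ t v)
        = ∑ b : Bool, ∑ τ : Fin n → Bool,
            N.sup' hN (fun v => (A v + sg b * ψ 0 v) + ∑ t, sg (τ t) * ψ t.succ v) := by
      intro ψ
      have he := Fintype.sum_equiv (Fin.consEquiv (fun _ : Fin (n+1) => Bool))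
        (fun p : Bool × (Fin n → Bool) =>
          N.sup' hN (fun v => (A v + sg p.1 * ψ 0 v) + ∑ t, sg (p.2 t) * ψ t.succ v))
        (fun σ : Fin (n+1) → Bool => N.sup' hN (fun v => A v + ∑ t, sg (σ t) * ψ t v))
        (fun p => by
          apply Finset.sup'_congr hN rfl
          intro v _
          rw [Fin.sum_univ_succ]
          simp [Fin.consEquiv, add_assoc])
      rw [← he, Fintype.sum_prod_type]
    rw [key φ, key u]
    calc ∑ b : Bool, ∑ τ : Fin n → Bool,
            N.sup' hN (fun v => (A v + sg b * φ 0 v) + ∑ t, sg (τ t) * φ t.succ v)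
        ≤ ∑ b : Bool, ∑ τ : Fin n → Bool,
            N.sup' hN (fun v => (A v + sg b * φ 0 v) + ∑ t, sg (τ t) * u t.succ v) := by
          refine Finset.sum_le_sum fun b _ => ?_
          exact ih (fun v => A v + sg b * φ 0 v) (fun t => φ t.succ) (fun t => u t.succ)
            (fun t => h t.succ)
      _ = ∑ τ : Fin n → Bool, ∑ b : Bool,
            N.sup' hN (fun v => (A v + ∑ t, sg (τ t) * u t.succ v) + sg b * φ 0 v) := by
          rw [Finset.sum_comm]
          refine Finset.sum_congr rfl fun τ _ => Finset.sum_congr rfl fun b _ => ?_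
          exact Finset.sup'_congr hN rfl fun v _ => by ring
      _ ≤ ∑ τ : Fin n → Bool, ∑ b : Bool,
            N.sup' hN (fun v => (A v + ∑ t, sg (τ t) * u t.succ v) + sg b * u 0 v) := by
          refine Finset.sum_le_sum fun τ _ => ?_
          have : ∀ (w : α → ℝ), ∑ b : Bool,
              N.sup' hN (fun v => (A v + ∑ t, sg (τ t) * u t.succ v) + sg b * w v)
              = N.sup' hN (fun v => (A v + ∑ t, sg (τ t) * u t.succ v) + - w v)
                + N.sup' hN (fun v => (A v + ∑ t, sg (τ t) * u t.succ v) + w v) := by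
            intro w; simp [sg]
          rw [this (φ 0), this (u 0)]
          have e1 : ∀ (w : α → ℝ), (N.sup' hN fun v => (A v + ∑ t, sg (τ t) * u t.succ v) + - w v)
              = N.sup' hN fun v => (A v + ∑ t, sg (τ t) * u t.succ v) - w v := by
            intro w; exact Finset.sup'_congr hN rfl fun v _ => by ring
          have tp := two_point N hN (fun v => A v + ∑ t, sg (τ t) * u t.succ v)
            (φ 0) (u 0) (fun i hi j hj => h 0 i hi j hj)
          beta_reduce at tp
          rw [e1 (φ 0), e1 (u 0)]
          linarith
      _ = ∑ b : Bool, ∑ τ : Fin n → Bool,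
            N.sup' hN (fun v => (A v + sg b * u 0 v) + ∑ t, sg (τ t) * u t.succ v) := by
          rw [Finset.sum_comm]
          refine Finset.sum_congr rfl fun τ _ => Finset.sum_congr rfl fun b _ => ?_
          exact Finset.sup'_congr hN rfl fun v _ => by ring


set_option maxHeartbeats 2000000

/-- Massart's finite class lemma, Rademacher-sum version. -/
lemma massart {α : Type*} (J : Finset α) (hJ : J.Nonempty) (n : ℕ) (hn : 0 < n)
    (Xb : ℝ) (hXb : 0 < Xb) (a : Fin n → α → ℝ) (ha : ∀ t, ∀ j ∈ J, |a t j| ≤ Xb)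
    (hJ2 : 2 ≤ J.card) :
    ∑ σ : Fin n → Bool, J.sup' hJ (fun j => ∑ t, sg (σ t) * a t j) ≤
      2 ^ n * (Xb * Real.sqrt (2 * n * Real.log J.card)) := by
  set K : ℝ := (J.card : ℝ) with hKdef
  have hK2 : (2:ℝ) ≤ K := by rw [hKdef]; exact_mod_cast hJ2
  have hlog : 0 < Real.log K := Real.log_pos (by linarith)
  have hn' : (0:ℝ) < n := by exact_mod_cast hn
  set lam : ℝ := Real.sqrt (2 * Real.log K / (n * Xb ^ 2)) with hlamdef
  have hlam : 0 < lam := Real.sqrt_pos.2 (by positivity)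
  set S : (Fin n → Bool) → ℝ := fun σ => J.sup' hJ (fun j => ∑ t, sg (σ t) * a t j) with hS
  set Avg : ℝ := (2 ^ n : ℝ)⁻¹ * ∑ σ : Fin n → Bool, S σ with hAvg
  have hcard : (Fintype.card (Fin n → Bool) : ℝ) = 2 ^ n := by
    simp [Fintype.card_fun]
  -- Jensen
  have jensen : Real.exp (lam * Avg) ≤
      ∑ σ : Fin n → Bool, (2 ^ n : ℝ)⁻¹ * Real.exp (lam * S σ) := by
    have h := convexOn_exp.map_sum_le (t := (univ : Finset (Fin n → Bool)))
      (w := fun _ => (2 ^ n : ℝ)⁻¹) (p := fun σ => lam * S σ)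
      (fun _ _ => by positivity)
      (by rw [Finset.sum_const, nsmul_eq_mul]
          rw [Finset.card_univ]
          rw [show ((Fintype.card (Fin n → Bool) : ℝ)) = 2 ^ n from hcard]
          field_simp)
      (fun _ _ => Set.mem_univ _)
    simpa [smul_eq_mul, Finset.mul_sum, hAvg, mul_comm, mul_left_comm, mul_assoc] using h
  -- union bound
  have union : ∀ σ, Real.exp (lam * S σ) ≤
      ∑ j ∈ J, Real.exp (lam * ∑ t, sg (σ t) * a t j) := by
    intro σ
    obtain ⟨j0, hj0, hj0eq⟩ := Finset.exists_mem_eq_sup' hJ (fun j => ∑ t, sg (σ t) * a t j)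
    have hSσ : S σ = ∑ t, sg (σ t) * a t j0 := by rw [hS]; exact hj0eq
    calc Real.exp (lam * S σ) = Real.exp (lam * ∑ t, sg (σ t) * a t j0) := by rw [hSσ]
      _ ≤ ∑ j ∈ J, Real.exp (lam * ∑ t, sg (σ t) * a t j) :=
          Finset.single_le_sum (f := fun j => Real.exp (lam * ∑ t, sg (σ t) * a t j))
            (fun j _ => (Real.exp_pos _).le) hj0
  -- MGF computation
  have mgf : ∀ j ∈ J, ∑ σ : Fin n → Bool, Real.exp (lam * ∑ t, sg (σ t) * a t j) ≤
      2 ^ n * Real.exp (n * (lam ^ 2 * Xb ^ 2 / 2)) := by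
    intro j hj
    have expand : ∀ σ : Fin n → Bool, Real.exp (lam * ∑ t, sg (σ t) * a t j)
        = ∏ t, Real.exp (lam * (sg (σ t) * a t j)) := by
      intro σ
      rw [← Real.exp_sum, Finset.mul_sum]
    calc ∑ σ : Fin n → Bool, Real.exp (lam * ∑ t, sg (σ t) * a t j)
        = ∑ σ ∈ Fintype.piFinset (fun _ : Fin n => (univ : Finset Bool)),
            ∏ t, Real.exp (lam * (sg (σ t) * a t j)) := by
          rw [Fintype.piFinset_univ]
          exact Finset.sum_congr rfl fun σ _ => expand σ
      _ = ∏ t, ∑ b : Bool, Real.exp (lam * (sg b * a t j)) :=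
          (Finset.prod_univ_sum (fun _ => (univ : Finset Bool))
            (fun t b => Real.exp (lam * (sg b * a t j)))).symm
      _ ≤ ∏ t, 2 * Real.exp (lam ^ 2 * Xb ^ 2 / 2) := by
          apply Finset.prod_le_prod
          · intro t _
            apply Finset.sum_nonneg
            intro b _
            exact (Real.exp_pos _).le
          · intro t _
            have hb : ∑ b : Bool, Real.exp (lam * (sg b * a t j))
                = 2 * Real.cosh (lam * a t j) := by
              rw [Fintype.sum_bool, Real.cosh_eq]
              simp [sg]
              ring
            rw [hb]
            have h1 : Real.cosh (lam * a t j) ≤ Real.exp ((lam * a t j) ^ 2 / 2) :=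
              Real.cosh_le_exp_half_sq _
            have h2 : (lam * a t j) ^ 2 / 2 ≤ lam ^ 2 * Xb ^ 2 / 2 := by
              have : (a t j) ^ 2 ≤ Xb ^ 2 := by
                have := ha t j hj
                nlinarith [abs_nonneg (a t j), le_abs_self (a t j), neg_abs_le (a t j)]
              nlinarith [sq_nonneg lam]
            have := h1.trans (Real.exp_le_exp.2 h2)
            linarith
      _ = 2 ^ n * Real.exp (n * (lam ^ 2 * Xb ^ 2 / 2)) := by
          rw [Finset.prod_const, Finset.card_univ, Fintype.card_fin, mul_pow,
            ← Real.exp_nat_mul]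
  -- combine
  have main : Real.exp (lam * Avg) ≤ K * Real.exp (n * (lam ^ 2 * Xb ^ 2 / 2)) := by
    calc Real.exp (lam * Avg) ≤ ∑ σ : Fin n → Bool, (2 ^ n : ℝ)⁻¹ * Real.exp (lam * S σ) := jensen
      _ ≤ ∑ σ : Fin n → Bool, (2 ^ n : ℝ)⁻¹ *
            (∑ j ∈ J, Real.exp (lam * ∑ t, sg (σ t) * a t j)) := by
          apply Finset.sum_le_sum
          intro σ _
          have := union σ
          have h2n : (0:ℝ) < (2 ^ n : ℝ)⁻¹ := by positivity
          nlinarith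
      _ = (2 ^ n : ℝ)⁻¹ * ∑ j ∈ J, ∑ σ : Fin n → Bool,
            Real.exp (lam * ∑ t, sg (σ t) * a t j) := by
          rw [← Finset.mul_sum, Finset.sum_comm]
      _ ≤ (2 ^ n : ℝ)⁻¹ * ∑ j ∈ J, (2 ^ n * Real.exp (n * (lam ^ 2 * Xb ^ 2 / 2))) := by
          apply mul_le_mul_of_nonneg_left _ (by positivity)
          exact Finset.sum_le_sum mgf
      _ = K * Real.exp (n * (lam ^ 2 * Xb ^ 2 / 2)) := by
          rw [Finset.sum_const, nsmul_eq_mul, hKdef]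
          field_simp
  have hlam2 : lam ^ 2 = 2 * Real.log K / (n * Xb ^ 2) := by
    rw [hlamdef, Real.sq_sqrt (by positivity)]
  have hexparg : n * (lam ^ 2 * Xb ^ 2 / 2) = Real.log K := by
    rw [hlam2]
    field_simp
  have step : lam * Avg ≤ 2 * Real.log K := by
    have hpos : (0:ℝ) < K * Real.exp (n * (lam ^ 2 * Xb ^ 2 / 2)) := by positivity
    have := (Real.le_log_iff_exp_le hpos).2 main
    rw [Real.log_mul (by linarith) (Real.exp_ne_zero _), Real.log_exp, hexparg] at this
    linarith
  have final : Avg ≤ Xb * Real.sqrt (2 * n * Real.log K) := by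
    have key : lam * (Xb * Real.sqrt (2 * n * Real.log K)) = 2 * Real.log K := by
      have h1 : lam * (Xb * Real.sqrt (2 * n * Real.log K))
          = (Real.sqrt (2 * Real.log K / (n * Xb ^ 2)) * Real.sqrt (2 * n * Real.log K)) * Xb := by
        rw [hlamdef]; ring
      have harg : 2 * Real.log K / (n * Xb ^ 2) * (2 * n * Real.log K)
          = (2 * Real.log K / Xb) ^ 2 := by
        field_simp
      rw [h1, ← Real.sqrt_mul (by positivity) (2 * n * Real.log K), harg,
        Real.sqrt_sq (by positivity)]
      field_simp
    have := step
    rw [← key] at this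
    exact le_of_mul_le_mul_left this hlam
  have : ∑ σ : Fin n → Bool, S σ = 2 ^ n * Avg := by
    rw [hAvg]
    field_simp
  rw [hS] at this
  rw [this]
  apply mul_le_mul_of_nonneg_left final (by positivity)


/-- A finite ε-net (in ℓ¹ distance) of the ℓ¹ ball, contained in the ball. -/
lemma l1_net (d : ℕ) (W ε : ℝ) (hW : 0 < W) (hε : 0 < ε) :
    ∃ N : Finset (Fin d → ℝ), N.Nonempty ∧ (∀ v ∈ N, (∑ i, |v i|) ≤ W) ∧
      ∀ w : Fin d → ℝ, (∑ i, |w i|) ≤ W → ∃ v ∈ N, (∑ i, |w i - v i|) ≤ ε := by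
  set B : Set (Fin d → ℝ) := {w | (∑ i, |w i|) ≤ W} with hB
  have hBclosed : IsClosed B := by
    have : Continuous fun w : Fin d → ℝ => ∑ i, |w i| := by
      continuity
    exact isClosed_le this continuous_const
  have hBsub : B ⊆ Metric.closedBall 0 W := by
    intro w hw
    rw [Metric.mem_closedBall]
    rw [dist_pi_le_iff hW.le]
    intro i
    simp only [Pi.zero_apply, Real.dist_eq, sub_zero]
    calc |w i| ≤ ∑ j, |w j| :=
          Finset.single_le_sum (f := fun j => |w j|) (fun j _ => abs_nonneg _) (Finset.mem_univ i)
      _ ≤ W := hw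
  have hBcompact : IsCompact B :=
    (Metric.isCompact_of_isClosed_isBounded hBclosed
      (Metric.isBounded_closedBall.subset hBsub))
  have h0B : (0 : Fin d → ℝ) ∈ B := by simp [hB, hW.le]
  have htb := hBcompact.totallyBounded
  set ε' : ℝ := ε / (d + 1) with hε'
  have hε'pos : 0 < ε' := by positivity
  obtain ⟨t, htsub, htfin, hcover⟩ :=
    (totallyBounded_iff_subset.mp htb) _ (Metric.dist_mem_uniformity hε'pos)
  classical
  refine ⟨insert 0 htfin.toFinset, ⟨0, Finset.mem_insert_self _ _⟩, ?_, ?_⟩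
  · intro v hv
    rcases Finset.mem_insert.mp hv with h | h
    · simp [h, hW.le]
    · exact htsub (htfin.mem_toFinset.mp h)
  · intro w hw
    obtain ⟨v, hv, hdist⟩ := by
      have := hcover hw
      simpa using this
    refine ⟨v, Finset.mem_insert_of_mem (htfin.mem_toFinset.mpr hv), ?_⟩
    have hper : ∀ i, |w i - v i| ≤ ε' := by
      intro i
      calc |w i - v i| = dist (w i) (v i) := (Real.dist_eq _ _).symm
        _ ≤ dist w v := dist_le_pi_dist w v i
        _ ≤ ε' := hdist.le
    calc (∑ i, |w i - v i|) ≤ ∑ _i : Fin d, ε' := Finset.sum_le_sum fun i _ => hper i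
      _ = d * ε' := by rw [Finset.sum_const]; simp [nsmul_eq_mul]
      _ ≤ ε := by
          rw [hε']
          rw [mul_div_assoc', div_le_iff₀ (by positivity : (0:ℝ) < (d:ℝ) + 1)]
          nlinarith [Nat.cast_nonneg (α := ℝ) d]

/-- Batch learning over the `ℓ₁`-ball: there is a universal constant `C > 0` such that for
every dimension `d ≥ 3`, label space `𝒴`, radius `W > 0`, instance bound `Xb > 0`,
`ρ`-Lipschitz loss `l`, distribution `μ` supported on `{x : ‖x‖_∞ ≤ Xb} × 𝒴`, and sample
size `n ≥ 1`, every empirical risk minimizer `erm` over `𝒲 = {w : ‖w‖₁ ≤ W}` has expected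
excess risk at most `C · ρ · Xb · W · √(ln d / n)`. -/
theorem stmt12 :
    ∃ C : ℝ, 0 < C ∧
      ∀ (d : ℕ), 3 ≤ d →
      ∀ (𝒴 : Type) (_ : MeasurableSpace 𝒴),
      ∀ (W Xb ρ : ℝ), 0 < W → 0 < Xb → 0 ≤ ρ →
      ∀ l : ℝ → 𝒴 → ℝ, (∀ (y : 𝒴) (a b : ℝ), |l a y - l b y| ≤ ρ * |a - b|) →
      ∀ (μ : Measure ((Fin d → ℝ) × 𝒴)) (_ : IsProbabilityMeasure μ),
      (∀ᵐ q ∂μ, ∀ i, |q.1 i| ≤ Xb) →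
      ∀ (n : ℕ), 0 < n →
      (∀ w : Fin d → ℝ, (∑ i, |w i|) ≤ W →
        Integrable (fun q : (Fin d → ℝ) × 𝒴 => l (∑ i, w i * q.1 i) q.2) μ) →
      ∀ erm : (Fin n → (Fin d → ℝ) × 𝒴) → (Fin d → ℝ),
      (∀ S, (∑ i, |erm S i|) ≤ W) →
      (∀ (S : Fin n → (Fin d → ℝ) × 𝒴) (w : Fin d → ℝ), (∑ i, |w i|) ≤ W →
        ∑ t, l (∑ i, erm S i * (S t).1 i) (S t).2 ≤ ∑ t, l (∑ i, w i * (S t).1 i) (S t).2) →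
      Integrable (fun S : Fin n → (Fin d → ℝ) × 𝒴 => ∫ q, l (∑ i, erm S i * q.1 i) q.2 ∂μ)
        (Measure.pi fun _ : Fin n => μ) →
      ∀ w : Fin d → ℝ, (∑ i, |w i|) ≤ W →
        (∫ S, (∫ q, l (∑ i, erm S i * q.1 i) q.2 ∂μ) ∂(Measure.pi fun _ : Fin n => μ))
            - ∫ q, l (∑ i, w i * q.1 i) q.2 ∂μ ≤
          C * ρ * Xb * W * Real.sqrt (Real.log d / n) := by
  classical
  refine ⟨4, by norm_num, ?_⟩
  intro d hd3 𝒴 m𝒴 W Xb ρ hW hXb hρ l hl μ hμprob hsupp n hn hInt erm hermball hermmin hermInt w hwball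
  haveI := hμprob
  set piμ : Measure (Fin n → (Fin d → ℝ) × 𝒴) := Measure.pi fun _ : Fin n => μ with hpiμdef
  haveI hpiprob : IsProbabilityMeasure piμ := by rw [hpiμdef]; infer_instance
  set f : (Fin d → ℝ) → ((Fin d → ℝ) × 𝒴) → ℝ := fun v q => l (∑ i, v i * q.1 i) q.2 with hfdef
  set g : (Fin d → ℝ) → ((Fin d → ℝ) × 𝒴) → ℝ := fun v q => f v q - f 0 q with hgdef
  set Lr : (Fin d → ℝ) → ℝ := fun v => ∫ q, f v q ∂μ with hLrdef
  set G : (Fin d → ℝ) → ℝ := fun v => ∫ q, g v q ∂μ with hGdef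
  set emp : (Fin d → ℝ) → (Fin n → (Fin d → ℝ) × 𝒴) → ℝ :=
    fun v S => (n:ℝ)⁻¹ * ∑ t, f v (S t) with hempdef
  set empg : (Fin d → ℝ) → (Fin n → (Fin d → ℝ) × 𝒴) → ℝ :=
    fun v S => (n:ℝ)⁻¹ * ∑ t, g v (S t) with hempgdef
  have hgoal1 : (fun S => ∫ q, l (∑ i, erm S i * q.1 i) q.2 ∂μ) = fun S => Lr (erm S) := rfl
  have hgoal2 : (∫ q, l (∑ i, w i * q.1 i) q.2 ∂μ) = Lr w := rfl
  have hn' : (0:ℝ) < n := by exact_mod_cast hn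
  have hρXb : (0:ℝ) ≤ ρ * Xb := mul_nonneg hρ hXb.le
  -- F0
  have hball0 : (∑ i, |(0 : Fin d → ℝ) i|) ≤ W := by simp [hW.le]
  -- F1 : pointwise Lipschitz in the weights
  have F1 : ∀ (v v' : Fin d → ℝ) (q : (Fin d → ℝ) × 𝒴), (∀ i, |q.1 i| ≤ Xb) →
      |f v q - f v' q| ≤ ρ * Xb * ∑ i, |v i - v' i| := by
    intro v v' q hq
    have h1 : |f v q - f v' q| ≤ ρ * |(∑ i, v i * q.1 i) - ∑ i, v' i * q.1 i| := hl q.2 _ _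
    have h2 : |(∑ i, v i * q.1 i) - ∑ i, v' i * q.1 i| ≤ Xb * ∑ i, |v i - v' i| := by
      rw [← Finset.sum_sub_distrib]
      calc |∑ i, (v i * q.1 i - v' i * q.1 i)| ≤ ∑ i, |v i * q.1 i - v' i * q.1 i| :=
            Finset.abs_sum_le_sum_abs _ _
        _ ≤ ∑ i, |v i - v' i| * Xb := by
            apply Finset.sum_le_sum
            intro i _
            rw [← sub_mul, abs_mul]
            exact mul_le_mul_of_nonneg_left (hq i) (abs_nonneg _)
        _ = Xb * ∑ i, |v i - v' i| := by rw [← Finset.sum_mul]; ring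
    calc |f v q - f v' q| ≤ ρ * (Xb * ∑ i, |v i - v' i|) :=
          h1.trans (mul_le_mul_of_nonneg_left h2 hρ)
      _ = ρ * Xb * ∑ i, |v i - v' i| := by ring
  -- F2
  have F2 : ∀ v : Fin d → ℝ, (∑ i, |v i|) ≤ W → Integrable (f v) μ := hInt
  -- F3
  have F3 : ∀ v : Fin d → ℝ, (∑ i, |v i|) ≤ W → Integrable (g v) μ := by
    intro v hv
    exact (F2 v hv).sub (F2 0 hball0)
  -- F4
  have F4 : ∀ v : Fin d → ℝ, (∑ i, |v i|) ≤ W →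
      ∀ᵐ q ∂μ, |g v q| ≤ ρ * Xb * W := by
    intro v hv
    filter_upwards [hsupp] with q hq
    have h0 : (∑ i, |v i - (0:Fin d → ℝ) i|) = ∑ i, |v i| := by simp
    have := F1 v 0 q hq
    rw [h0] at this
    calc |g v q| = |f v q - f 0 q| := rfl
      _ ≤ ρ * Xb * ∑ i, |v i| := this
      _ ≤ ρ * Xb * W := mul_le_mul_of_nonneg_left hv hρXb
  -- F5
  have F5 : ∀ v : Fin d → ℝ, (∑ i, |v i|) ≤ W → G v = Lr v - Lr 0 := by
    intro v hv
    rw [hGdef, hLrdef]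
    exact integral_sub (F2 v hv) (F2 0 hball0)
  -- eval maps are measure preserving
  have me : ∀ t : Fin n, MeasurePreserving (fun S : Fin n → (Fin d → ℝ) × 𝒴 => S t) piμ μ := by
    intro t
    rw [hpiμdef]
    exact mp_eval (fun _ : Fin n => μ) t
  -- F6 : a.e. coordinate bounds on samples
  have F6 : ∀ᵐ S ∂piμ, ∀ t i, |(S t).1 i| ≤ Xb := by
    rw [MeasureTheory.ae_all_iff]
    intro t
    exact ((me t).quasiMeasurePreserving.tendsto_ae).eventually hsupp
  -- F7 : marginals
  have F7 : ∀ v : Fin d → ℝ, (∑ i, |v i|) ≤ W → ∫ S, emp v S ∂piμ = Lr v := by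
    intro v hv
    rw [hempdef]
    have : ∫ S, (n:ℝ)⁻¹ * ∑ t, f v (S t) ∂piμ = (n:ℝ)⁻¹ * ∑ t : Fin n, ∫ S, f v (S t) ∂piμ := by
      rw [integral_const_mul, integral_finset_sum]
      intro t _
      exact integrable_comp_mp (me t) (F2 v hv)
    rw [this]
    have heach : ∀ t : Fin n, ∫ S, f v (S t) ∂piμ = Lr v := by
      intro t
      exact integral_comp_mp (me t) (F2 v hv).aestronglyMeasurable
    rw [Finset.sum_congr rfl fun t _ => heach t, Finset.sum_const, Finset.card_univ,
      Fintype.card_fin, nsmul_eq_mul]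
    field_simp
  have F7g : ∀ v : Fin d → ℝ, (∑ i, |v i|) ≤ W → ∫ S, empg v S ∂piμ = G v := by
    intro v hv
    rw [hempgdef]
    have : ∫ S, (n:ℝ)⁻¹ * ∑ t, g v (S t) ∂piμ = (n:ℝ)⁻¹ * ∑ t : Fin n, ∫ S, g v (S t) ∂piμ := by
      rw [integral_const_mul, integral_finset_sum]
      intro t _
      exact integrable_comp_mp (me t) (F3 v hv)
    rw [this]
    have heach : ∀ t : Fin n, ∫ S, g v (S t) ∂piμ = G v := by
      intro t
      exact integral_comp_mp (me t) (F3 v hv).aestronglyMeasurable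
    rw [Finset.sum_congr rfl fun t _ => heach t, Finset.sum_const, Finset.card_univ,
      Fintype.card_fin, nsmul_eq_mul]
    field_simp
  -- F8 : integrability of empirical quantities
  have F8 : ∀ v : Fin d → ℝ, (∑ i, |v i|) ≤ W → Integrable (emp v) piμ := by
    intro v hv
    rw [hempdef]
    exact (integrable_finset_sum _ fun t _ => integrable_comp_mp (me t) (F2 v hv)).const_mul _
  have F8g : ∀ v : Fin d → ℝ, (∑ i, |v i|) ≤ W → Integrable (empg v) piμ := by
    intro v hv
    rw [hempgdef]
    exact (integrable_finset_sum _ fun t _ => integrable_comp_mp (me t) (F3 v hv)).const_mul _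
  -- F10 : a.e. bound for empg
  have F10 : ∀ v : Fin d → ℝ, (∑ i, |v i|) ≤ W →
      ∀ᵐ S ∂piμ, |empg v S| ≤ ρ * Xb * W := by
    intro v hv
    have hae : ∀ᵐ S ∂piμ, ∀ t, |g v (S t)| ≤ ρ * Xb * W := by
      rw [MeasureTheory.ae_all_iff]
      intro t
      exact ((me t).quasiMeasurePreserving.tendsto_ae).eventually (F4 v hv)
    filter_upwards [hae] with S hS
    rw [hempgdef]
    calc |(n:ℝ)⁻¹ * ∑ t, g v (S t)| = (n:ℝ)⁻¹ * |∑ t, g v (S t)| := by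
          rw [abs_mul, abs_of_nonneg (by positivity : (0:ℝ) ≤ (n:ℝ)⁻¹)]
      _ ≤ (n:ℝ)⁻¹ * ∑ t : Fin n, (ρ * Xb * W) := by
          apply mul_le_mul_of_nonneg_left _ (by positivity)
          exact (Finset.abs_sum_le_sum_abs _ _).trans (Finset.sum_le_sum fun t _ => hS t)
      _ = ρ * Xb * W := by
          rw [Finset.sum_const, Finset.card_univ, Fintype.card_fin, nsmul_eq_mul]
          field_simp
  -- |G v| bound
  have F4G : ∀ v : Fin d → ℝ, (∑ i, |v i|) ≤ W → |G v| ≤ ρ * Xb * W := by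
    intro v hv
    rw [hGdef]
    have := norm_integral_le_of_norm_le_const (μ := μ) (f := g v) (C := ρ * Xb * W) ?_
    · simpa [measure_univ] using this
    · filter_upwards [F4 v hv] with q hq
      simpa using hq
  -- begin epsilon argument
  rw [hgoal2]
  have hgoal1' : (∫ S, (∫ q, l (∑ i, erm S i * q.1 i) q.2 ∂μ) ∂piμ) = ∫ S, Lr (erm S) ∂piμ := rfl
  rw [hgoal1']
  apply le_of_forall_pos_le_add
  intro η hη
  set ε : ℝ := η / (2 * (ρ * Xb) + 1) with hεdef
  have hεpos : 0 < ε := div_pos hη (by linarith)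
  obtain ⟨N, hN, hNball, hNnet⟩ := l1_net d W ε hW hεpos
  set B : ℝ := ρ * Xb * W with hBdef
  have hBnn : 0 ≤ B := by rw [hBdef]; positivity
  have hermInt' : Integrable (fun S => Lr (erm S)) piμ := hermInt
  have hempg_sub : ∀ (v : Fin d → ℝ) S, empg v S = emp v S - emp 0 S := by
    intro v S
    rw [hempgdef, hempdef]
    simp only [hgdef]
    rw [Finset.sum_sub_distrib, mul_sub]
  -- R1 : pointwise reduction to the net
  have R1 : ∀ᵐ S ∂piμ, Lr (erm S) - emp w S ≤
      (N.sup' hN fun v => G v - empg v S) + (Lr 0 - emp 0 S) + 2 * (ρ * Xb * ε) := by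
    filter_upwards [F6] with S hbd
    obtain ⟨v, hvN, hvnear⟩ := hNnet (erm S) (hermball S)
    have hvball := hNball v hvN
    have e1 : Lr (erm S) - Lr v ≤ ρ * Xb * ε := by
      have hsub : Lr (erm S) - Lr v = ∫ q, (f (erm S) q - f v q) ∂μ :=
        (integral_sub (F2 _ (hermball S)) (F2 v hvball)).symm
      rw [hsub]
      have hmono : ∫ q, (f (erm S) q - f v q) ∂μ ≤ ∫ _q, ρ * Xb * ε ∂μ := by
        apply integral_mono_ae ((F2 _ (hermball S)).sub (F2 v hvball)) (integrable_const _)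
        filter_upwards [hsupp] with q hq
        have h1 := F1 (erm S) v q hq
        have h2 : ρ * Xb * ∑ i, |erm S i - v i| ≤ ρ * Xb * ε :=
          mul_le_mul_of_nonneg_left hvnear hρXb
        calc f (erm S) q - f v q ≤ |f (erm S) q - f v q| := le_abs_self _
          _ ≤ ρ * Xb * ε := h1.trans h2
      simpa [measure_univ] using hmono
    have e2 : emp v S - emp (erm S) S ≤ ρ * Xb * ε := by
      rw [hempdef]
      simp only []
      rw [← mul_sub, ← Finset.sum_sub_distrib]
      have hsum : ∑ t, (f v (S t) - f (erm S) (S t)) ≤ ∑ t : Fin n, (ρ * Xb * ε) := by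
        apply Finset.sum_le_sum
        intro t _
        have h1 := F1 v (erm S) (S t) (hbd t)
        have habs : ∑ i, |v i - erm S i| = ∑ i, |erm S i - v i| := by
          apply Finset.sum_congr rfl
          intro i _
          rw [abs_sub_comm]
        have h2 : ρ * Xb * ∑ i, |v i - erm S i| ≤ ρ * Xb * ε := by
          rw [habs]
          exact mul_le_mul_of_nonneg_left hvnear hρXb
        calc f v (S t) - f (erm S) (S t) ≤ |f v (S t) - f (erm S) (S t)| := le_abs_self _
          _ ≤ ρ * Xb * ε := h1.trans h2
      calc (n:ℝ)⁻¹ * ∑ t, (f v (S t) - f (erm S) (S t)) ≤ (n:ℝ)⁻¹ * ∑ t : Fin n, (ρ * Xb * ε) :=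
            mul_le_mul_of_nonneg_left hsum (by positivity)
        _ = ρ * Xb * ε := by
            rw [Finset.sum_const, Finset.card_univ, Fintype.card_fin, nsmul_eq_mul]
            field_simp
    have e3 : emp (erm S) S ≤ emp w S := by
      rw [hempdef]
      exact mul_le_mul_of_nonneg_left (hermmin S w hwball) (by positivity)
    have e4 : G v - empg v S ≤ N.sup' hN fun v => G v - empg v S :=
      Finset.le_sup' (fun v => G v - empg v S) hvN
    have e5 := F5 v hvball
    have e6 := hempg_sub v S
    linarith
  -- integrability of the sup term
  have haesm_empg : ∀ v : Fin d → ℝ, (∑ i, |v i|) ≤ W →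
      AEStronglyMeasurable (empg v) piμ := fun v hv => (F8g v hv).aestronglyMeasurable
  have hsupInt : Integrable (fun S => N.sup' hN fun v => G v - empg v S) piμ := by
    apply integrable_of_bound
      (aesm_sup' N hN _ (fun v hv => aestronglyMeasurable_const.sub (haesm_empg v (hNball v hv))))
      (2 * B)
    have hae : ∀ᵐ S ∂piμ, ∀ v ∈ (↑N : Set (Fin d → ℝ)), |G v - empg v S| ≤ 2 * B := by
      refine (MeasureTheory.ae_ball_iff N.countable_toSet).mpr ?_
      intro v hv
      have hv' : v ∈ N := Finset.mem_coe.mp hv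
      filter_upwards [F10 v (hNball v hv')] with S hS
      have h1 := F4G v (hNball v hv')
      calc |G v - empg v S| ≤ |G v| + |empg v S| := abs_sub _ _
        _ ≤ B + B := add_le_add h1 hS
        _ = 2 * B := by ring
    filter_upwards [hae] with S hS
    exact abs_sup'_le N hN _ _ (fun v hv => hS v (Finset.mem_coe.mpr hv))
  -- R2 : integrate the reduction
  have R2 : (∫ S, Lr (erm S) ∂piμ) - Lr w ≤
      (∫ S, (N.sup' hN fun v => G v - empg v S) ∂piμ) + 2 * (ρ * Xb * ε) := by
    have hLHSInt : Integrable (fun S => Lr (erm S) - emp w S) piμ :=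
      hermInt'.sub (F8 w hwball)
    have hRHSInt : Integrable (fun S =>
        (N.sup' hN fun v => G v - empg v S) + (Lr 0 - emp 0 S) + 2 * (ρ * Xb * ε)) piμ :=
      (hsupInt.add ((integrable_const _).sub (F8 0 hball0))).add (integrable_const _)
    have hstep := integral_mono_ae hLHSInt hRHSInt R1
    have hL : ∫ S, (Lr (erm S) - emp w S) ∂piμ = (∫ S, Lr (erm S) ∂piμ) - Lr w := by
      rw [integral_sub hermInt' (F8 w hwball), F7 w hwball]
    have hR : ∫ S, ((N.sup' hN fun v => G v - empg v S) + (Lr 0 - emp 0 S) + 2 * (ρ * Xb * ε)) ∂piμ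
        = (∫ S, (N.sup' hN fun v => G v - empg v S) ∂piμ) + 2 * (ρ * Xb * ε) := by
      have i2 : Integrable (fun S => Lr 0 - emp 0 S) piμ := (integrable_const _).sub (F8 0 hball0)
      have i1 : Integrable (fun S =>
          (N.sup' hN fun v => G v - empg v S) + (Lr 0 - emp 0 S)) piμ := hsupInt.add i2
      rw [integral_add i1 (integrable_const _), integral_add hsupInt i2,
        integral_sub (integrable_const _) (F8 0 hball0), F7 0 hball0]
      simp [measure_univ]
    rw [hL, hR] at hstep
    exact hstep
  -- Rademacher complexity
  set Rad : (Fin n → (Fin d → ℝ) × 𝒴) → ℝ := fun S => (2^n : ℝ)⁻¹ *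
    ∑ σ : Fin n → Bool, N.sup' hN (fun v => (n:ℝ)⁻¹ * ∑ t, sg (σ t) * g v (S t)) with hRaddef
  -- a.e. bound on g along the sample, for all v in the net
  have hgae : ∀ᵐ S ∂piμ, ∀ v ∈ (↑N : Set (Fin d → ℝ)), ∀ t, |g v (S t)| ≤ B := by
    refine (MeasureTheory.ae_ball_iff N.countable_toSet).mpr ?_
    intro v hv
    rw [MeasureTheory.ae_all_iff]
    intro t
    exact ((me t).quasiMeasurePreserving.tendsto_ae).eventually (F4 v (hNball v (Finset.mem_coe.mp hv)))
  have hsup'bd : ∀ (S : Fin n → (Fin d → ℝ) × 𝒴), (∀ v ∈ N, ∀ t, |g v (S t)| ≤ B) →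
      ∀ σ : Fin n → Bool, |N.sup' hN (fun v => (n:ℝ)⁻¹ * ∑ t, sg (σ t) * g v (S t))| ≤ B := by
    intro S hS σ
    apply abs_sup'_le
    intro v hv
    calc |(n:ℝ)⁻¹ * ∑ t, sg (σ t) * g v (S t)|
        = (n:ℝ)⁻¹ * |∑ t, sg (σ t) * g v (S t)| := by
          rw [abs_mul, abs_of_nonneg (by positivity : (0:ℝ) ≤ (n:ℝ)⁻¹)]
      _ ≤ (n:ℝ)⁻¹ * ∑ t : Fin n, B := by
          apply mul_le_mul_of_nonneg_left _ (by positivity)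
          refine (Finset.abs_sum_le_sum_abs _ _).trans (Finset.sum_le_sum fun t _ => ?_)
          rw [abs_mul, sg_abs, one_mul]
          exact hS v hv t
      _ = B := by
          rw [Finset.sum_const, Finset.card_univ, Fintype.card_fin, nsmul_eq_mul]
          field_simp
  have hRadInt : Integrable Rad piμ := by
    apply integrable_of_bound ?_ B
    · filter_upwards [hgae] with S hS
      rw [hRaddef]
      have h1 : |∑ σ : Fin n → Bool, N.sup' hN (fun v => (n:ℝ)⁻¹ * ∑ t, sg (σ t) * g v (S t))|
          ≤ ∑ σ : Fin n → Bool, B := by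
        refine (Finset.abs_sum_le_sum_abs _ _).trans (Finset.sum_le_sum fun σ _ => ?_)
        exact hsup'bd S (fun v hv t => hS v (Finset.mem_coe.mpr hv) t) σ
      calc |(2^n : ℝ)⁻¹ * ∑ σ : Fin n → Bool, N.sup' hN (fun v => (n:ℝ)⁻¹ * ∑ t, sg (σ t) * g v (S t))|
          = (2^n : ℝ)⁻¹ * |∑ σ : Fin n → Bool, N.sup' hN (fun v => (n:ℝ)⁻¹ * ∑ t, sg (σ t) * g v (S t))| := by
            rw [abs_mul, abs_of_nonneg (by positivity : (0:ℝ) ≤ (2^n:ℝ)⁻¹)]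
        _ ≤ (2^n : ℝ)⁻¹ * ∑ σ : Fin n → Bool, B := mul_le_mul_of_nonneg_left h1 (by positivity)
        _ = B := by
            rw [Finset.sum_const, Finset.card_univ, nsmul_eq_mul]
            have : (Fintype.card (Fin n → Bool) : ℝ) = 2 ^ n := by simp [Fintype.card_fun]
            rw [this]
            field_simp
    · rw [hRaddef]
      apply AEStronglyMeasurable.const_mul
      apply Finset.aestronglyMeasurable_fun_sum
      intro σ _
      apply aesm_sup'
      intro v hv
      apply AEStronglyMeasurable.const_mul
      apply Finset.aestronglyMeasurable_fun_sum
      intro t _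
      exact ((F3 v (hNball v hv)).aestronglyMeasurable.comp_quasiMeasurePreserving
        (me t).quasiMeasurePreserving).const_mul _
  have R3 : ∫ S, (N.sup' hN fun v => G v - empg v S) ∂piμ ≤ 2 * ∫ S, Rad S ∂piμ := by
    set P : Measure ((Fin n → (Fin d → ℝ) × 𝒴) × (Fin n → (Fin d → ℝ) × 𝒴)) := piμ.prod piμ
      with hPdef
    haveI : IsProbabilityMeasure P := by rw [hPdef]; infer_instance
    have mpfst : MeasurePreserving Prod.fst P piμ := by
      refine ⟨measurable_fst, ?_⟩
      rw [hPdef, Measure.map_fst_prod]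
      simp [measure_univ]
    have mpsnd : MeasurePreserving Prod.snd P piμ := by
      refine ⟨measurable_snd, ?_⟩
      rw [hPdef, Measure.map_snd_prod]
      simp [measure_univ]
    set H : (Fin n → (Fin d → ℝ) × 𝒴) × (Fin n → (Fin d → ℝ) × 𝒴) → ℝ :=
      fun p => N.sup' hN (fun v => empg v p.2 - empg v p.1) with hHdef
    -- H is integrable on P
    have hHaesm : AEStronglyMeasurable H P := by
      rw [hHdef]
      apply aesm_sup'
      intro v hv
      exact ((haesm_empg v (hNball v hv)).comp_quasiMeasurePreserving
        mpsnd.quasiMeasurePreserving).sub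
        ((haesm_empg v (hNball v hv)).comp_quasiMeasurePreserving mpfst.quasiMeasurePreserving)
    have hHbd : ∀ᵐ p ∂P, ∀ v ∈ (↑N : Set (Fin d → ℝ)), |empg v p.2 - empg v p.1| ≤ 2 * B := by
      refine (MeasureTheory.ae_ball_iff N.countable_toSet).mpr ?_
      intro v hv
      have h2 := (mpsnd.quasiMeasurePreserving.tendsto_ae).eventually
        (F10 v (hNball v (Finset.mem_coe.mp hv)))
      have h1 := (mpfst.quasiMeasurePreserving.tendsto_ae).eventually
        (F10 v (hNball v (Finset.mem_coe.mp hv)))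
      filter_upwards [h1, h2] with p hp1 hp2
      calc |empg v p.2 - empg v p.1| ≤ |empg v p.2| + |empg v p.1| := abs_sub _ _
        _ ≤ B + B := add_le_add hp2 hp1
        _ = 2 * B := by ring
    have hHint : Integrable H P := by
      apply integrable_of_bound hHaesm (2 * B)
      filter_upwards [hHbd] with p hp
      rw [hHdef]
      exact abs_sup'_le N hN _ _ (fun v hv => hp v (Finset.mem_coe.mpr hv))
    -- pointwise Jensen step
    have hHSint : ∀ S, Integrable (fun S' => H (S, S')) piμ := by
      intro S
      apply integrable_of_bound
      · rw [hHdef]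
        apply aesm_sup'
        intro v hv
        have : AEStronglyMeasurable (fun S' => empg v S' - empg v S) piμ :=
          (haesm_empg v (hNball v hv)).sub aestronglyMeasurable_const
        exact this
      · have hae : ∀ᵐ S' ∂piμ, ∀ v ∈ (↑N : Set (Fin d → ℝ)), |empg v S'| ≤ B := by
          refine (MeasureTheory.ae_ball_iff N.countable_toSet).mpr ?_
          intro v hv
          exact F10 v (hNball v (Finset.mem_coe.mp hv))
        filter_upwards [hae] with S' hS'
        rw [hHdef]
        apply abs_sup'_le
        intro v hv
        calc |empg v S' - empg v S| ≤ |empg v S'| + |empg v S| := abs_sub _ _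
          _ ≤ B + N.sup' hN (fun u => |empg u S|) :=
              add_le_add (hS' v (Finset.mem_coe.mpr hv))
                (Finset.le_sup' (fun u => |empg u S|) hv)
    have step1 : ∀ S, (N.sup' hN fun v => G v - empg v S) ≤ ∫ S', H (S, S') ∂piμ := by
      intro S
      apply Finset.sup'_le
      intro v hv
      have h1 : G v - empg v S = ∫ S', (empg v S' - empg v S) ∂piμ := by
        rw [integral_sub (F8g v (hNball v hv)) (integrable_const _), F7g v (hNball v hv),
          integral_const]
        simp [measure_univ]
      rw [h1]
      apply integral_mono_ae ((F8g v (hNball v hv)).sub (integrable_const _)) (hHSint S)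
      apply Filter.Eventually.of_forall
      intro S'
      exact Finset.le_sup' (fun u => empg u S' - empg u S) hv
    -- step 2 : compare with the double-sample integral
    have step2 : ∫ S, (N.sup' hN fun v => G v - empg v S) ∂piμ ≤ ∫ p, H p ∂P := by
      have hprod : ∫ p, H p ∂P = ∫ S, ∫ S', H (S, S') ∂piμ ∂piμ := by
        rw [hPdef]
        exact integral_prod H (by rwa [hPdef] at hHint)
      rw [hprod]
      apply integral_mono_ae hsupInt ?_ (Filter.Eventually.of_forall step1)
      have := (by rwa [hPdef] at hHint : Integrable H (piμ.prod piμ)).integral_prod_left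
      exact this
    -- flips
    have flips : ∀ σ : Fin n → Bool,
        Integrable (fun p : (Fin n → (Fin d → ℝ) × 𝒴) × (Fin n → (Fin d → ℝ) × 𝒴) =>
          N.sup' hN (fun v => (n:ℝ)⁻¹ * ∑ t, sg (σ t) * (g v (p.2 t) - g v (p.1 t)))) P ∧
        (∫ p, (N.sup' hN (fun v => (n:ℝ)⁻¹ * ∑ t, sg (σ t) * (g v (p.2 t) - g v (p.1 t)))) ∂P
          = ∫ p, H p ∂P) := by
      intro σ
      set Φ : (Fin n → (Fin d → ℝ) × 𝒴) × (Fin n → (Fin d → ℝ) × 𝒴) →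
          (Fin n → (Fin d → ℝ) × 𝒴) × (Fin n → (Fin d → ℝ) × 𝒴) :=
        fun p => (fun t => if σ t then p.2 t else p.1 t, fun t => if σ t then p.1 t else p.2 t)
        with hΦdef
      have mpΦ : MeasurePreserving Φ P P := by
        set e := MeasurableEquiv.arrowProdEquivProdArrow ((Fin d → ℝ) × 𝒴) ((Fin d → ℝ) × 𝒴) (Fin n)
          with hedef
        have mpe : MeasurePreserving e (Measure.pi fun _ : Fin n => μ.prod μ) P := by
          rw [hPdef, hpiμdef, hedef]
          exact measurePreserving_arrowProdEquivProdArrow _ _ _ (fun _ => μ) (fun _ => μ)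
        have mpesymm : MeasurePreserving e.symm P (Measure.pi fun _ : Fin n => μ.prod μ) :=
          MeasurePreserving.symm e mpe
        have mpΨ : MeasurePreserving
            (fun (ω : Fin n → ((Fin d → ℝ) × 𝒴) × ((Fin d → ℝ) × 𝒴)) t =>
              (if σ t then Prod.swap else id) (ω t))
            (Measure.pi fun _ : Fin n => μ.prod μ) (Measure.pi fun _ : Fin n => μ.prod μ) := by
          apply measurePreserving_pi
          intro t
          by_cases h : σ t
          · rw [if_pos h]
            exact Measure.measurePreserving_swap
          · rw [if_neg h]
            exact MeasurePreserving.id _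
        have hcomp := mpe.comp (mpΨ.comp mpesymm)
        have hΦeq : (⇑e ∘ ((fun (ω : Fin n → ((Fin d → ℝ) × 𝒴) × ((Fin d → ℝ) × 𝒴)) t =>
            (if σ t then Prod.swap else id) (ω t)) ∘ ⇑e.symm)) = Φ := by
          funext p
          rw [hΦdef]
          apply Prod.ext
          · funext t
            by_cases h : σ t <;>
              simp [hedef, MeasurableEquiv.arrowProdEquivProdArrow,
                Equiv.arrowProdEquivProdArrow, h]
          · funext t
            by_cases h : σ t <;>
              simp [hedef, MeasurableEquiv.arrowProdEquivProdArrow,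
                Equiv.arrowProdEquivProdArrow, h]
        rwa [hΦeq] at hcomp
      have hDeq : (fun p => H (Φ p)) = (fun p :
          (Fin n → (Fin d → ℝ) × 𝒴) × (Fin n → (Fin d → ℝ) × 𝒴) =>
          N.sup' hN (fun v => (n:ℝ)⁻¹ * ∑ t, sg (σ t) * (g v (p.2 t) - g v (p.1 t)))) := by
        funext p
        simp only [hHdef]
        apply Finset.sup'_congr hN rfl
        intro v _
        rw [hempgdef]
        simp only [hΦdef]
        rw [← mul_sub, ← Finset.sum_sub_distrib]
        congr 1
        apply Finset.sum_congr rfl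
        intro t _
        by_cases h : σ t <;> simp [h, sg] <;> try ring
      have hDint := integrable_comp_mp mpΦ hHint
      rw [hDeq] at hDint
      refine ⟨hDint, ?_⟩
      rw [← hDeq]
      exact integral_comp_mp mpΦ hHint.aestronglyMeasurable
    -- average over sign vectors
    have havg : ∫ p, H p ∂P = ∫ p, ((2^n:ℝ)⁻¹ * ∑ σ : Fin n → Bool,
        N.sup' hN (fun v => (n:ℝ)⁻¹ * ∑ t, sg (σ t) * (g v (p.2 t) - g v (p.1 t)))) ∂P := by
      rw [integral_const_mul, integral_finset_sum _ (fun σ _ => (flips σ).1),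
        Finset.sum_congr rfl (fun σ _ => (flips σ).2), Finset.sum_const, Finset.card_univ,
        nsmul_eq_mul]
      have hcard : (Fintype.card (Fin n → Bool) : ℝ) = 2 ^ n := by simp [Fintype.card_fun]
      rw [hcard]
      have h2n : (2^n : ℝ) ≠ 0 := by positivity
      field_simp
    -- pointwise split into two one-sample Rademacher averages
    have hsplit : ∀ p : (Fin n → (Fin d → ℝ) × 𝒴) × (Fin n → (Fin d → ℝ) × 𝒴),
        ((2^n:ℝ)⁻¹ * ∑ σ : Fin n → Bool,
          N.sup' hN (fun v => (n:ℝ)⁻¹ * ∑ t, sg (σ t) * (g v (p.2 t) - g v (p.1 t))))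
          ≤ Rad p.2 + Rad p.1 := by
      intro p
      have h1 : ∀ σ : Fin n → Bool,
          N.sup' hN (fun v => (n:ℝ)⁻¹ * ∑ t, sg (σ t) * (g v (p.2 t) - g v (p.1 t)))
          ≤ N.sup' hN (fun v => (n:ℝ)⁻¹ * ∑ t, sg (σ t) * g v (p.2 t))
            + N.sup' hN (fun v => (n:ℝ)⁻¹ * ∑ t, sg (!(σ t)) * g v (p.1 t)) := by
        intro σ
        have heq : ∀ v : Fin d → ℝ,
            (n:ℝ)⁻¹ * ∑ t, sg (σ t) * (g v (p.2 t) - g v (p.1 t))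
            = ((n:ℝ)⁻¹ * ∑ t, sg (σ t) * g v (p.2 t))
              + ((n:ℝ)⁻¹ * ∑ t, sg (!(σ t)) * g v (p.1 t)) := by
          intro v
          rw [← mul_add, ← Finset.sum_add_distrib]
          congr 1
          apply Finset.sum_congr rfl
          intro t _
          rw [sg_not]
          ring
        calc N.sup' hN (fun v => (n:ℝ)⁻¹ * ∑ t, sg (σ t) * (g v (p.2 t) - g v (p.1 t)))
            = N.sup' hN (fun v => ((n:ℝ)⁻¹ * ∑ t, sg (σ t) * g v (p.2 t))
              + ((n:ℝ)⁻¹ * ∑ t, sg (!(σ t)) * g v (p.1 t))) :=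
              Finset.sup'_congr hN rfl (fun v _ => heq v)
          _ ≤ _ := sup'_add_le N hN _ _
      have hreix : ∑ σ : Fin n → Bool,
          N.sup' hN (fun v => (n:ℝ)⁻¹ * ∑ t, sg (!(σ t)) * g v (p.1 t))
          = ∑ σ : Fin n → Bool,
          N.sup' hN (fun v => (n:ℝ)⁻¹ * ∑ t, sg (σ t) * g v (p.1 t)) :=
        Fintype.sum_equiv
          ⟨fun σ t => !(σ t), fun σ t => !(σ t), fun σ => by funext t; simp,
            fun σ => by funext t; simp⟩ _ _ (fun σ => by simp only [Equiv.coe_fn_mk])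
      calc ((2^n:ℝ)⁻¹ * ∑ σ : Fin n → Bool,
          N.sup' hN (fun v => (n:ℝ)⁻¹ * ∑ t, sg (σ t) * (g v (p.2 t) - g v (p.1 t))))
          ≤ (2^n:ℝ)⁻¹ * ∑ σ : Fin n → Bool,
            (N.sup' hN (fun v => (n:ℝ)⁻¹ * ∑ t, sg (σ t) * g v (p.2 t))
              + N.sup' hN (fun v => (n:ℝ)⁻¹ * ∑ t, sg (!(σ t)) * g v (p.1 t))) :=
            mul_le_mul_of_nonneg_left (Finset.sum_le_sum fun σ _ => h1 σ) (by positivity)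
        _ = Rad p.2 + Rad p.1 := by
            rw [Finset.sum_add_distrib, hreix, mul_add, hRaddef]
    have hint2 : Integrable (fun p : (Fin n → (Fin d → ℝ) × 𝒴) × (Fin n → (Fin d → ℝ) × 𝒴) =>
        Rad p.2 + Rad p.1) P :=
      (integrable_comp_mp mpsnd hRadInt).add (integrable_comp_mp mpfst hRadInt)
    have hintD : Integrable (fun p : (Fin n → (Fin d → ℝ) × 𝒴) × (Fin n → (Fin d → ℝ) × 𝒴) =>
        (2^n:ℝ)⁻¹ * ∑ σ : Fin n → Bool,
          N.sup' hN (fun v => (n:ℝ)⁻¹ * ∑ t, sg (σ t) * (g v (p.2 t) - g v (p.1 t)))) P :=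
      (integrable_finset_sum _ fun σ _ => (flips σ).1).const_mul _
    calc ∫ S, (N.sup' hN fun v => G v - empg v S) ∂piμ
        ≤ ∫ p, H p ∂P := step2
      _ = ∫ p, ((2^n:ℝ)⁻¹ * ∑ σ : Fin n → Bool,
            N.sup' hN (fun v => (n:ℝ)⁻¹ * ∑ t, sg (σ t) * (g v (p.2 t) - g v (p.1 t)))) ∂P := havg
      _ ≤ ∫ p, (Rad p.2 + Rad p.1) ∂P :=
            integral_mono_ae hintD hint2 (Filter.Eventually.of_forall hsplit)
      _ = (∫ S, Rad S ∂piμ) + ∫ S, Rad S ∂piμ := by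
            rw [integral_add (integrable_comp_mp mpsnd hRadInt) (integrable_comp_mp mpfst hRadInt),
              integral_comp_mp mpsnd hRadInt.aestronglyMeasurable,
              integral_comp_mp mpfst hRadInt.aestronglyMeasurable]
      _ = 2 * ∫ S, Rad S ∂piμ := by ring
  have R4 : ∫ S, Rad S ∂piμ ≤ ρ * W * (Xb * Real.sqrt (2 * n * Real.log (2*(d:ℝ)))) / n := by
    have hKpt : ∀ᵐ S ∂piμ, Rad S ≤ ρ * W * (Xb * Real.sqrt (2 * n * Real.log (2*(d:ℝ)))) / n := by
      filter_upwards [F6, hgae] with S hbd hgS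
      -- contraction
      have hcond : ∀ t : Fin n, ∀ i ∈ N, ∀ j ∈ N,
          (n:ℝ)⁻¹ * g i (S t) - (n:ℝ)⁻¹ * g j (S t) ≤
            |(n:ℝ)⁻¹ * (ρ * ∑ k, i k * (S t).1 k) - (n:ℝ)⁻¹ * (ρ * ∑ k, j k * (S t).1 k)| := by
        intro t i _ j _
        have h1 := hl (S t).2 (∑ k, i k * (S t).1 k) (∑ k, j k * (S t).1 k)
        have hgf : g i (S t) - g j (S t) = f i (S t) - f j (S t) := by
          simp only [hgdef]; ring
        have hR : |(n:ℝ)⁻¹ * (ρ * ∑ k, i k * (S t).1 k) - (n:ℝ)⁻¹ * (ρ * ∑ k, j k * (S t).1 k)|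
            = (n:ℝ)⁻¹ * (ρ * |(∑ k, i k * (S t).1 k) - ∑ k, j k * (S t).1 k|) := by
          rw [← mul_sub, ← mul_sub, abs_mul, abs_mul,
            abs_of_nonneg (by positivity : (0:ℝ) ≤ (n:ℝ)⁻¹), abs_of_nonneg hρ]
        rw [hR, ← mul_sub, hgf]
        apply mul_le_mul_of_nonneg_left _ (by positivity : (0:ℝ) ≤ (n:ℝ)⁻¹)
        calc f i (S t) - f j (S t) ≤ |f i (S t) - f j (S t)| := le_abs_self _
          _ ≤ ρ * |(∑ k, i k * (S t).1 k) - ∑ k, j k * (S t).1 k| := h1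
      have hcontr := contraction N hN n (fun _ => (0:ℝ))
        (fun t v => (n:ℝ)⁻¹ * g v (S t))
        (fun t v => (n:ℝ)⁻¹ * (ρ * ∑ k, v k * (S t).1 k)) hcond
      -- rewrite Rad's inner sup in the contraction form
      have hL : ∀ σ : Fin n → Bool,
          N.sup' hN (fun v => (n:ℝ)⁻¹ * ∑ t, sg (σ t) * g v (S t))
          = N.sup' hN (fun v => (fun _ => (0:ℝ)) v + ∑ t, sg (σ t) * ((n:ℝ)⁻¹ * g v (S t))) := by
        intro σ
        apply Finset.sup'_congr hN rfl
        intro v _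
        rw [Finset.mul_sum, zero_add]
        exact Finset.sum_congr rfl fun t _ => by ring
      -- the linear-class bound
      have hd0 : 0 < d := by omega
      haveI : Nonempty (Fin d) := ⟨⟨0, hd0⟩⟩
      have huniv : (Finset.univ : Finset (Fin d × Bool)).Nonempty := Finset.univ_nonempty
      set M : (Fin n → Bool) → ℝ := fun σ => (Finset.univ : Finset (Fin d × Bool)).sup' huniv
        (fun j => ∑ t, sg (σ t) * (sg j.2 * (S t).1 j.1)) with hMdef
      have hMV : ∀ (σ : Fin n → Bool) (i : Fin d), |∑ t, sg (σ t) * (S t).1 i| ≤ M σ := by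
        intro σ i
        rw [abs_le]
        constructor
        · have h1 : ∑ t, sg (σ t) * (sg true * (S t).1 i) = -(∑ t, sg (σ t) * (S t).1 i) := by
            rw [← Finset.sum_neg_distrib]
            exact Finset.sum_congr rfl fun t _ => by simp [sg]
          have := Finset.le_sup' (f := fun j : Fin d × Bool => ∑ t, sg (σ t) * (sg j.2 * (S t).1 j.1))
            (Finset.mem_univ (i, true))
          rw [hMdef]
          simp only at this ⊢
          rw [h1] at this
          linarith
        · have h1 : ∑ t, sg (σ t) * (sg false * (S t).1 i) = ∑ t, sg (σ t) * (S t).1 i := by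
            exact Finset.sum_congr rfl fun t _ => by simp [sg]
          have := Finset.le_sup' (f := fun j : Fin d × Bool => ∑ t, sg (σ t) * (sg j.2 * (S t).1 j.1))
            (Finset.mem_univ (i, false))
          rw [hMdef]
          simp only at this ⊢
          rw [h1] at this
          linarith
      have hM0 : ∀ σ, 0 ≤ M σ := fun σ =>
        (abs_nonneg _).trans (hMV σ ⟨0, hd0⟩)
      have hlin : ∀ σ : Fin n → Bool,
          N.sup' hN (fun v => (fun _ => (0:ℝ)) v + ∑ t, sg (σ t) * ((n:ℝ)⁻¹ * (ρ * ∑ k, v k * (S t).1 k)))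
          ≤ (n:ℝ)⁻¹ * ρ * W * M σ := by
        intro σ
        apply Finset.sup'_le
        intro v hv
        have heq : (fun _ => (0:ℝ)) v + ∑ t, sg (σ t) * ((n:ℝ)⁻¹ * (ρ * ∑ k, v k * (S t).1 k))
            = (n:ℝ)⁻¹ * ρ * ∑ k, v k * (∑ t, sg (σ t) * (S t).1 k) := by
          simp only [zero_add, Finset.mul_sum]
          rw [Finset.sum_comm]
          exact Finset.sum_congr rfl fun k _ => Finset.sum_congr rfl fun t _ => by ring
        rw [heq]
        have hsum : ∑ k, v k * (∑ t, sg (σ t) * (S t).1 k) ≤ W * M σ := by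
          calc ∑ k, v k * (∑ t, sg (σ t) * (S t).1 k)
              ≤ ∑ k, |v k| * M σ := by
                apply Finset.sum_le_sum
                intro k _
                calc v k * (∑ t, sg (σ t) * (S t).1 k)
                    ≤ |v k * (∑ t, sg (σ t) * (S t).1 k)| := le_abs_self _
                  _ = |v k| * |∑ t, sg (σ t) * (S t).1 k| := abs_mul _ _
                  _ ≤ |v k| * M σ := mul_le_mul_of_nonneg_left (hMV σ k) (abs_nonneg _)
            _ = (∑ k, |v k|) * M σ := by rw [Finset.sum_mul]
            _ ≤ W * M σ := mul_le_mul_of_nonneg_right (hNball v hv) (hM0 σ)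
        calc (n:ℝ)⁻¹ * ρ * ∑ k, v k * (∑ t, sg (σ t) * (S t).1 k)
            ≤ (n:ℝ)⁻¹ * ρ * (W * M σ) := by
              apply mul_le_mul_of_nonneg_left hsum (by positivity)
          _ = (n:ℝ)⁻¹ * ρ * W * M σ := by ring
      -- Massart
      have hcard : ((Finset.univ : Finset (Fin d × Bool)).card : ℝ) = 2 * (d:ℝ) := by
        rw [Finset.card_univ, Fintype.card_prod, Fintype.card_fin, Fintype.card_bool]
        push_cast
        ring
      have hcard2 : 2 ≤ (Finset.univ : Finset (Fin d × Bool)).card := by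
        rw [Finset.card_univ, Fintype.card_prod, Fintype.card_fin, Fintype.card_bool]
        omega
      have hmass := massart (Finset.univ : Finset (Fin d × Bool)) huniv n hn Xb hXb
        (fun t j => sg j.2 * (S t).1 j.1)
        (fun t j _ => by rw [abs_mul, sg_abs, one_mul]; exact hbd t j.1) hcard2
      rw [hcard] at hmass
      -- assemble
      calc Rad S = (2^n : ℝ)⁻¹ * ∑ σ : Fin n → Bool,
            N.sup' hN (fun v => (fun _ => (0:ℝ)) v + ∑ t, sg (σ t) * ((n:ℝ)⁻¹ * g v (S t))) := by
            rw [hRaddef]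
            exact congrArg _ (Finset.sum_congr rfl fun σ _ => hL σ)
        _ ≤ (2^n : ℝ)⁻¹ * ∑ σ : Fin n → Bool,
            N.sup' hN (fun v => (fun _ => (0:ℝ)) v + ∑ t, sg (σ t) * ((n:ℝ)⁻¹ * (ρ * ∑ k, v k * (S t).1 k))) :=
            mul_le_mul_of_nonneg_left hcontr (by positivity)
        _ ≤ (2^n : ℝ)⁻¹ * ∑ σ : Fin n → Bool, (n:ℝ)⁻¹ * ρ * W * M σ :=
            mul_le_mul_of_nonneg_left (Finset.sum_le_sum fun σ _ => hlin σ) (by positivity)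
        _ = (n:ℝ)⁻¹ * ρ * W * ((2^n : ℝ)⁻¹ * ∑ σ : Fin n → Bool, M σ) := by
            rw [← Finset.mul_sum]
            ring
        _ ≤ (n:ℝ)⁻¹ * ρ * W * ((2^n : ℝ)⁻¹ * (2^n * (Xb * Real.sqrt (2 * n * Real.log (2*(d:ℝ)))))) := by
            apply mul_le_mul_of_nonneg_left _ (by positivity)
            exact mul_le_mul_of_nonneg_left hmass (by positivity)
        _ = ρ * W * (Xb * Real.sqrt (2 * n * Real.log (2*(d:ℝ)))) / n := by
            have h2n : (2^n : ℝ) ≠ 0 := by positivity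
            field_simp
    calc ∫ S, Rad S ∂piμ ≤ ∫ _S, (ρ * W * (Xb * Real.sqrt (2 * n * Real.log (2*(d:ℝ)))) / n) ∂piμ :=
          integral_mono_ae hRadInt (integrable_const _) hKpt
      _ = ρ * W * (Xb * Real.sqrt (2 * n * Real.log (2*(d:ℝ)))) / n := by
          simp [measure_univ]
  -- final arithmetic
  have hd3' : (3:ℝ) ≤ (d:ℝ) := by exact_mod_cast hd3
  have hlog2d : Real.log (2*(d:ℝ)) ≤ 2 * Real.log d := by
    have h1 : (2*(d:ℝ)) ≤ (d:ℝ)^2 := by nlinarith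
    have h2 : Real.log (2*(d:ℝ)) ≤ Real.log ((d:ℝ)^2) :=
      Real.log_le_log (by positivity) h1
    rw [Real.log_pow] at h2
    push_cast at h2
    linarith
  have hlogd_pos : 0 < Real.log d := Real.log_pos (by linarith)
  have harith : 2 * (ρ * W * (Xb * Real.sqrt (2 * n * Real.log (2*(d:ℝ)))) / n)
      ≤ 4 * ρ * Xb * W * Real.sqrt (Real.log d / n) := by
    have hs1 : Real.sqrt (2 * n * Real.log (2*(d:ℝ))) ≤ Real.sqrt (4 * (n * Real.log d)) := by
      apply Real.sqrt_le_sqrt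
      have hm := mul_le_mul_of_nonneg_left hlog2d hn'.le
      nlinarith [hm]
    have hs2 : Real.sqrt (4 * (n * Real.log d)) = 2 * (Real.sqrt n * Real.sqrt (Real.log d)) := by
      rw [show (4 : ℝ) * (n * Real.log d) = 2^2 * (n * Real.log d) by ring,
        Real.sqrt_mul (by positivity), Real.sqrt_sq (by norm_num : (0:ℝ) ≤ 2),
        Real.sqrt_mul hn'.le]
    have hs3 : Real.sqrt (Real.log d / n) = Real.sqrt (Real.log d) / Real.sqrt n :=
      Real.sqrt_div hlogd_pos.le n
    have hsn : Real.sqrt n * Real.sqrt n = (n:ℝ) := Real.mul_self_sqrt hn'.le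
    have hsnpos : 0 < Real.sqrt n := Real.sqrt_pos.2 hn'
    have hfrac : Real.sqrt n / (n:ℝ) = 1 / Real.sqrt n := by
      rw [eq_div_iff hsnpos.ne', div_mul_eq_mul_div, hsn, div_self hn'.ne']
    calc 2 * (ρ * W * (Xb * Real.sqrt (2 * n * Real.log (2*(d:ℝ)))) / n)
        ≤ 2 * (ρ * W * (Xb * (2 * (Real.sqrt n * Real.sqrt (Real.log d)))) / n) := by
          gcongr
          exact hs1.trans (le_of_eq hs2)
      _ = (4 * ρ * Xb * W * Real.sqrt (Real.log d)) * (Real.sqrt n / n) := by ring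
      _ = (4 * ρ * Xb * W * Real.sqrt (Real.log d)) * (1 / Real.sqrt n) := by rw [hfrac]
      _ = 4 * ρ * Xb * W * (Real.sqrt (Real.log d) / Real.sqrt n) := by ring
      _ = 4 * ρ * Xb * W * Real.sqrt (Real.log d / n) := by rw [hs3]
  calc (∫ S, Lr (erm S) ∂piμ) - Lr w
      ≤ (∫ S, (N.sup' hN fun v => G v - empg v S) ∂piμ) + 2 * (ρ * Xb * ε) := R2
    _ ≤ 2 * ∫ S, Rad S ∂piμ + 2 * (ρ * Xb * ε) := by linarith
    _ ≤ 2 * (ρ * W * (Xb * Real.sqrt (2 * n * Real.log (2*(d:ℝ)))) / n) + 2 * (ρ * Xb * ε) := by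
        have := R4; linarith
    _ ≤ 4 * ρ * Xb * W * Real.sqrt (Real.log d / n) + η := by
        have hεb : 2 * (ρ * Xb * ε) ≤ η := by
          have h2 : ε * (2 * (ρ * Xb) + 1) = η := by
            rw [hεdef]; field_simp
          nlinarith [hεpos, hρXb]
        linarith
end

section
/- Online multitask regret with group-norm regularization: Consider k tasks over ℝ^d, and for t = 1,…,n let (X_t, y_t) be an example with X_t ∈ ℝ^{k×d} (row x_t^j ∈ ℝ^d is the instance for task j) and y_t = (y_t^1,…,y_t^k). For each task j let l^j : ℝ × 𝒴^j → ℝ be ρ-Lipschitz in its first argument, and define l_t(W) = Σ_{j=1}^k l^j(⟨w^j, x_t^j⟩, y_t^j) for W ∈ ℝ^{k×d} with rows w^j. Let d ≥ 3, let 𝒲_{2,1} = {W : ‖W‖_{2,1} ≤ W₀}, and suppose ‖X_t‖_{2,∞} ≤ X for all t. Then there is a sequence W_1, …, W_n ∈ 𝒲_{2,1}, where each W_t is determined by the examples (X_1,y_1),…,(X_{t−1},y_{t−1}) only, such that (1/n) Σ_{t=1}^n l_t(W_t) − min_{W ∈ 𝒲_{2,1}} (1/n) Σ_{t=1}^n l_t(W)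 ≤ C · ρ · X · W₀ · √(ln(d)/n) for a universal constant C > 0. -/
open scoped BigOperators
open Finset Real

set_option maxHeartbeats 1000000

/-- The Euclidean norm of the `j`-th column of a matrix. -/
noncomputable def col2 {k d : ℕ} (M : Matrix (Fin k) (Fin d) ℝ) (j : Fin d) : ℝ :=
  Real.sqrt (∑ i, M i j ^ 2)

/-- The group norm `‖M‖_{2,1} = ∑ j ‖Mʲ‖₂` (sum of Euclidean column norms). -/
noncomputable def grpNorm21 {k d : ℕ} (M : Matrix (Fin k) (Fin d) ℝ) : ℝ :=
  ∑ j, col2 M j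


noncomputable def subg (f : ℝ → ℝ) (a : ℝ) : ℝ :=
  sInf ((fun b => (f b - f a) / (b - a)) '' Set.Ioi a)

lemma subg_spec (f : ℝ → ℝ) (ρ : ℝ) (hlip : ∀ a b, |f a - f b| ≤ ρ * |a - b|)
    (hconv : ConvexOn ℝ Set.univ f) (a : ℝ) :
    |subg f a| ≤ ρ ∧ ∀ b, f a + subg f a * (b - a) ≤ f b := by
  set s : Set ℝ := (fun b => (f b - f a) / (b - a)) '' Set.Ioi a with hs
  have hρ0 : 0 ≤ ρ := by
    have := hlip a (a+1); simp at this; nlinarith [abs_nonneg (f a - f (a+1)), this]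
  have hne : s.Nonempty := ⟨(f (a+1) - f a)/(a+1-a), ⟨a+1, by simp, rfl⟩⟩
  have hslope : ∀ x ∈ s, |x| ≤ ρ := by
    rintro x ⟨b, hb, rfl⟩
    have hb' : a < b := hb
    rw [abs_div]
    rw [div_le_iff₀ (by rw [abs_pos]; linarith)]
    calc |f b - f a| ≤ ρ * |b - a| := hlip b a
    _ = ρ * |b - a| := rfl
  have hbdd : BddBelow s := ⟨-ρ, fun x hx => neg_le_of_abs_le (hslope x hx)⟩
  have hτle : subg f a ≤ ρ := by
    refine le_trans (csInf_le hbdd ⟨a+1, by simp, rfl⟩) ?_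
    exact le_of_abs_le (hslope _ ⟨a+1, by simp, rfl⟩)
  have hτge : -ρ ≤ subg f a := le_csInf hne (fun x hx => neg_le_of_abs_le (hslope x hx))
  refine ⟨abs_le.2 ⟨hτge, hτle⟩, fun b => ?_⟩
  rcases lt_trichotomy b a with hba | rfl | hab
  · -- b < a : slope(b,a) ≤ each slope(a,b') so slope(b,a) ≤ inf
    have key : (f a - f b)/(a - b) ≤ subg f a := by
      refine le_csInf hne ?_
      rintro x ⟨b', hb', rfl⟩
      exact hconv.slope_mono_adjacent (Set.mem_univ b) (Set.mem_univ b') hba hb'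
    have h1 : subg f a * (b - a) ≤ (f a - f b)/(a - b) * (b - a) := by
      apply mul_le_mul_of_nonpos_right key (by linarith)
    have h2 : (f a - f b)/(a - b) * (b - a) = f b - f a := by
      have : a - b ≠ 0 := by linarith
      field_simp
      ring
    linarith
  · simp
  · have key : subg f a ≤ (f b - f a)/(b - a) := csInf_le hbdd ⟨b, hab, rfl⟩
    have h1 : subg f a * (b - a) ≤ (f b - f a)/(b - a) * (b - a) :=
      mul_le_mul_of_nonneg_right key (by linarith)
    have h2 : (f b - f a)/(b - a) * (b - a) = f b - f a :=
      div_mul_cancel₀ _ (by linarith)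
    linarith

noncomputable def projB {k : ℕ} (R : ℝ) (v : EuclideanSpace ℝ (Fin k)) :
    EuclideanSpace ℝ (Fin k) :=
  if ‖v‖ ≤ R then v else (R / ‖v‖) • v

lemma projB_norm_le {k : ℕ} (R : ℝ) (hR : 0 ≤ R) (v : EuclideanSpace ℝ (Fin k)) :
    ‖projB R v‖ ≤ R := by
  unfold projB
  split_ifs with h
  · exact h
  · push_neg at h
    have hv : 0 < ‖v‖ := lt_of_le_of_lt hR h
    rw [norm_smul, Real.norm_eq_abs, abs_div, abs_of_nonneg hR, abs_of_pos hv,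
      div_mul_cancel₀ _ (ne_of_gt hv)]

lemma projB_dist_le {k : ℕ} (R : ℝ) (hR : 0 ≤ R) (v u : EuclideanSpace ℝ (Fin k))
    (hu : ‖u‖ ≤ R) : ‖projB R v - u‖ ≤ ‖v - u‖ := by
  unfold projB
  split_ifs with h
  · exact le_refl _
  · push_neg at h
    have hv : 0 < ‖v‖ := lt_of_le_of_lt hR h
    set c : ℝ := R / ‖v‖ with hc
    have hc1 : c < 1 := (div_lt_one hv).2 h
    have hc0 : 0 ≤ c := div_nonneg hR hv.le
    have hinner : (0:ℝ) ≤ inner ℝ (v - c • v) (c • v - u) := by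
      have : inner ℝ (v - c • v) (c • v - u) = (1 - c) * (c * ‖v‖^2 - inner ℝ v u) := by
        rw [show v - c • v = (1 - c) • v by rw [sub_smul, one_smul]]
        rw [real_inner_smul_left, inner_sub_right, real_inner_smul_right,
          real_inner_self_eq_norm_sq]
        try ring
      rw [this]
      apply mul_nonneg (by linarith)
      have : inner ℝ v u ≤ ‖v‖ * ‖u‖ := real_inner_le_norm v u
      have h2 : ‖v‖ * ‖u‖ ≤ ‖v‖ * R := by nlinarith
      have h3 : c * ‖v‖^2 = R * ‖v‖ := by rw [hc]; field_simp
      nlinarith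
    have hexp : ‖v - u‖^2 = ‖v - c • v‖^2 + 2 * inner ℝ (v - c • v) (c • v - u)
        + ‖c • v - u‖^2 := by
      have : v - u = (v - c • v) + (c • v - u) := by abel
      rw [this, norm_add_sq_real]
    have : ‖c • v - u‖^2 ≤ ‖v - u‖^2 := by nlinarith [sq_nonneg ‖v - c • v‖]
    exact (pow_le_pow_iff_left₀ (norm_nonneg _) (norm_nonneg _) two_ne_zero).1 this

lemma ogd_regret {k : ℕ} (n : ℕ) (R η G : ℝ) (hR : 0 ≤ R) (hη : 0 < η) (hG : 0 ≤ G)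
    (g v : ℕ → EuclideanSpace ℝ (Fin k)) (hv0 : v 0 = 0)
    (hstep : ∀ t, t < n → v (t + 1) = projB R (v t - η • g t))
    (hg : ∀ t, t < n → ‖g t‖ ≤ G)
    (u : EuclideanSpace ℝ (Fin k)) (hu : ‖u‖ ≤ R) :
    ∑ t ∈ range n, (inner ℝ (g t) (v t - u) : ℝ) ≤ R ^ 2 / (2 * η) + η * n * G ^ 2 / 2 := by
  have key : ∀ t, t < n → (inner ℝ (g t) (v t - u) : ℝ) ≤
      (‖v t - u‖ ^ 2 - ‖v (t+1) - u‖ ^ 2) / (2 * η) + η / 2 * G ^ 2 := by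
    intro t ht
    have h1 : ‖v (t+1) - u‖ ≤ ‖v t - η • g t - u‖ := by
      rw [hstep t ht]; exact projB_dist_le R hR _ u hu
    have h2 : ‖v t - η • g t - u‖ ^ 2 = ‖v t - u‖ ^ 2 - 2 * η * inner ℝ (g t) (v t - u)
        + η ^ 2 * ‖g t‖ ^ 2 := by
      have : v t - η • g t - u = (v t - u) - η • g t := by abel
      rw [this, norm_sub_sq_real, real_inner_smul_right, norm_smul, Real.norm_eq_abs,
        mul_pow, sq_abs, real_inner_comm]
      ring
    have h3 : ‖v (t+1) - u‖ ^ 2 ≤ ‖v t - η • g t - u‖ ^ 2 :=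
      pow_le_pow_left₀ (norm_nonneg _) h1 2
    have h4 : ‖g t‖ ^ 2 ≤ G ^ 2 := pow_le_pow_left₀ (norm_nonneg _) (hg t ht) 2
    rw [div_add' _ _ _ (by positivity), le_div_iff₀ (by positivity)]
    nlinarith
  calc ∑ t ∈ range n, (inner ℝ (g t) (v t - u) : ℝ)
      ≤ ∑ t ∈ range n, ((‖v t - u‖ ^ 2 - ‖v (t+1) - u‖ ^ 2) / (2 * η) + η / 2 * G ^ 2) :=
        Finset.sum_le_sum (fun t ht => key t (mem_range.1 ht))
    _ = (‖v 0 - u‖ ^ 2 - ‖v n - u‖ ^ 2) / (2 * η) + n * (η / 2 * G ^ 2) := by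
        rw [Finset.sum_add_distrib, ← Finset.sum_div, Finset.sum_range_sub']
        simp [mul_comm]
    _ ≤ R ^ 2 / (2 * η) + η * n * G ^ 2 / 2 := by
        have h5 : ‖v 0 - u‖ ^ 2 = ‖u‖ ^ 2 := by rw [hv0, zero_sub, norm_neg]
        have h6 : ‖u‖ ^ 2 ≤ R ^ 2 := pow_le_pow_left₀ (norm_nonneg _) hu 2
        have h7 : 0 ≤ ‖v n - u‖ ^ 2 := sq_nonneg _
        have h8 : (‖v 0 - u‖ ^ 2 - ‖v n - u‖ ^ 2) / (2 * η) ≤ R ^ 2 / (2 * η) := by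
          apply div_le_div_of_nonneg_right ?_ (by positivity)
          linarith [h5, h6, h7]
        linarith

lemma exp_le_chord {β x : ℝ} (hβ : 0 ≤ β) (h0 : 0 ≤ x) (h1 : x ≤ 1) :
    Real.exp (-β * x) ≤ 1 - (1 - Real.exp (-β)) * x := by
  have := convexOn_exp.2 (Set.mem_univ 0) (Set.mem_univ (-β)) (by linarith : (0:ℝ) ≤ 1 - x)
    h0 (by ring)
  simp only [smul_eq_mul, mul_zero, Real.exp_zero, mul_neg] at this ⊢
  calc Real.exp (-β * x) = Real.exp ((1-x) * 0 + x * (-β)) := by ring_nf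
    _ ≤ (1-x) * 1 + x * Real.exp (-β) := by simpa using this
    _ = 1 - (1 - Real.exp (-β)) * x := by ring

lemma hedge_regret (d n : ℕ) (hd : 0 < d) (β : ℝ) (hβ0 : 0 < β) (hβ1 : β ≤ 1/2)
    (ℓ : ℕ → Fin d → ℝ) (hℓ : ∀ t c, t < n → 0 ≤ ℓ t c ∧ ℓ t c ≤ 1) :
    ∀ c₀ : Fin d,
      ∑ t ∈ range n, (∑ c, (Real.exp (-β * ∑ s ∈ range t, ℓ s c) /
          ∑ c', Real.exp (-β * ∑ s ∈ range t, ℓ s c')) * ℓ t c)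
        ≤ (∑ s ∈ range n, ℓ s c₀) + 2 * Real.log d / β + β * n := by
  intro c₀
  set L : ℕ → Fin d → ℝ := fun t c => ∑ s ∈ range t, ℓ s c with hL
  set Z : ℕ → ℝ := fun t => ∑ c, Real.exp (-β * L t c) with hZ
  have hZpos : ∀ t, 0 < Z t := fun t =>
    Finset.sum_pos (fun c _ => Real.exp_pos _) (univ_nonempty_iff.2 ⟨⟨0, hd⟩⟩)
  set a : ℝ := 1 - Real.exp (-β) with ha
  have ha0 : 0 < a := by
    have : Real.exp (-β) < 1 := Real.exp_lt_one_iff.2 (by linarith)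
    linarith
  have haβ : a ≤ β := by
    have := Real.add_one_le_exp (-β)
    have h2 : Real.exp (-β) ≥ 1 - β := by linarith
    simp only [ha]; linarith
  set P : ℕ → Fin d → ℝ := fun t c => Real.exp (-β * L t c) / Z t with hP
  -- per-step
  have step : ∀ t, t < n → Real.log (Z (t+1)) ≤ Real.log (Z t) - a * ∑ c, P t c * ℓ t c := by
    intro t ht
    have hsum : Z (t+1) ≤ Z t * (1 - a * ∑ c, P t c * ℓ t c) := by
      have e1 : ∀ c : Fin d, Real.exp (-β * L (t+1) c)
          = Real.exp (-β * L t c) * Real.exp (-β * ℓ t c) := by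
        intro c
        rw [← Real.exp_add]
        congr 1
        rw [hL]
        simp [Finset.sum_range_succ]
        ring
      have e2 : Z (t+1) ≤ ∑ c, Real.exp (-β * L t c) * (1 - a * ℓ t c) := by
        rw [hZ]
        simp only
        refine Finset.sum_le_sum (fun c _ => ?_)
        rw [e1 c]
        have := exp_le_chord hβ0.le (hℓ t c ht).1 (hℓ t c ht).2
        calc Real.exp (-β * L t c) * Real.exp (-β * ℓ t c)
            ≤ Real.exp (-β * L t c) * (1 - a * ℓ t c) := by
              apply mul_le_mul_of_nonneg_left _ (Real.exp_pos _).le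
              simpa [ha] using this
          _ = _ := rfl
      have e3 : ∑ c, Real.exp (-β * L t c) * (1 - a * ℓ t c)
          = Z t - a * ∑ c, Real.exp (-β * L t c) * ℓ t c := by
        rw [hZ]
        simp only [mul_sub, Finset.sum_sub_distrib, Finset.mul_sum]
        congr 1
        · simp [mul_one]
        · congr 1; funext c; ring
      have e4 : ∑ c, Real.exp (-β * L t c) * ℓ t c = Z t * ∑ c, P t c * ℓ t c := by
        rw [hP, Finset.mul_sum]
        congr 1; funext c
        rw [div_mul_eq_mul_div, mul_comm (Z t)]
        exact (div_mul_cancel₀ _ (hZpos t).ne').symm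
      calc Z (t+1) ≤ Z t - a * (Z t * ∑ c, P t c * ℓ t c) := by rw [← e4, ← e3]; exact e2
        _ = Z t * (1 - a * ∑ c, P t c * ℓ t c) := by ring
    -- take logs
    have hin : ∀ c : Fin d, 0 ≤ P t c * ℓ t c := fun c =>
      mul_nonneg (div_nonneg (Real.exp_pos _).le (hZpos t).le) (hℓ t c ht).1
    have hsum1 : ∑ c, P t c * ℓ t c ≤ 1 := by
      calc ∑ c, P t c * ℓ t c ≤ ∑ c, P t c := by
            refine Finset.sum_le_sum (fun c _ => ?_)
            calc P t c * ℓ t c ≤ P t c * 1 :=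
                mul_le_mul_of_nonneg_left (hℓ t c ht).2
                  (div_nonneg (Real.exp_pos _).le (hZpos t).le)
              _ = P t c := mul_one _
        _ = 1 := by
            rw [hP]
            simp only
            rw [← Finset.sum_div, show ∑ c, Real.exp (-β * L t c) = Z t from rfl]
            exact div_self (hZpos t).ne'
    have hx : 0 ≤ a * ∑ c, P t c * ℓ t c := mul_nonneg ha0.le (Finset.sum_nonneg
      (fun c _ => hin c))
    have hpos2 : 0 < 1 - a * ∑ c, P t c * ℓ t c := by
      have : a * ∑ c, P t c * ℓ t c ≤ a := by
        calc a * ∑ c, P t c * ℓ t c ≤ a * 1 := mul_le_mul_of_nonneg_left hsum1 ha0.le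
          _ = a := mul_one _
      have ha1 : a < 1 := by
        have := Real.exp_pos (-β); simp only [ha]; linarith
      linarith
    calc Real.log (Z (t+1)) ≤ Real.log (Z t * (1 - a * ∑ c, P t c * ℓ t c)) := by
          apply Real.log_le_log _ hsum
          exact hZpos (t+1)
      _ = Real.log (Z t) + Real.log (1 - a * ∑ c, P t c * ℓ t c) :=
          Real.log_mul (hZpos t).ne' hpos2.ne'
      _ ≤ Real.log (Z t) - a * ∑ c, P t c * ℓ t c := by
          have := Real.log_le_sub_one_of_pos hpos2
          linarith
  -- telescope
  have tele : ∀ m, m ≤ n →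
      Real.log (Z m) ≤ Real.log (Z 0) - a * ∑ t ∈ range m, ∑ c, P t c * ℓ t c := by
    intro m
    induction m with
    | zero => intro _; simp
    | succ q ih =>
      intro h
      have h1 := ih (Nat.le_of_succ_le h)
      have h2 := step q (Nat.lt_of_succ_le h)
      rw [Finset.sum_range_succ, mul_add]
      linarith
  have tn := tele n le_rfl
  set A : ℝ := ∑ t ∈ range n, ∑ c, P t c * ℓ t c with hA
  set D : ℝ := Real.log d with hD
  set Lc : ℝ := ∑ s ∈ range n, ℓ s c₀ with hLc
  have hD0 : 0 ≤ D := Real.log_nonneg (by exact_mod_cast hd)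
  have hLc0 : 0 ≤ Lc := Finset.sum_nonneg (fun s hs => (hℓ s c₀ (mem_range.1 hs)).1)
  have hLcn : Lc ≤ n := by
    calc Lc ≤ ∑ _s ∈ range n, (1:ℝ) :=
        Finset.sum_le_sum (fun s hs => (hℓ s c₀ (mem_range.1 hs)).2)
      _ = n := by simp
  have hZ0 : Real.log (Z 0) = D := by
    have : Z 0 = d := by
      rw [hZ]; simp [hL]
    rw [this, hD]
  have hZn : -β * Lc ≤ Real.log (Z n) := by
    have h1 : Real.exp (-β * L n c₀) ≤ Z n := by
      rw [hZ]
      exact Finset.single_le_sum (f := fun c => Real.exp (-β * L n c))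
        (fun c _ => (Real.exp_pos _).le) (mem_univ c₀)
    have := Real.log_le_log (Real.exp_pos _) h1
    rwa [Real.log_exp] at this
  have hAa : a * A ≤ D + β * Lc := by
    have : -β * Lc ≤ D - a * A := by rw [← hZ0]; linarith
    linarith
  -- arithmetic facts about a, β
  have hexpβ := Real.add_one_le_exp β
  have hkey : Real.exp (-β) * (1 + β) ≤ 1 := by
    rw [Real.exp_neg, inv_mul_le_iff₀ (Real.exp_pos β)]
    linarith
  have h4 : β ≤ a * (1 + β) := by
    have : a * (1 + β) = (1 + β) - Real.exp (-β) * (1 + β) := by rw [ha]; ring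
    linarith [this ▸ le_refl (a * (1+β))]
  have h2 : β / 2 ≤ a := by
    have hβ1' : β ≤ 1 := by linarith
    have hinv : Real.exp (-β) ≤ (1 + β)⁻¹ := by
      rw [Real.exp_neg]
      exact inv_anti₀ (by linarith) (by linarith)
    have hinv2 : (1 + β)⁻¹ ≤ 1 - β / 2 := by
      rw [inv_le_iff_one_le_mul₀' (by linarith : (0:ℝ) < 1 + β)]
      nlinarith
    rw [ha]; linarith
  -- combine
  have s1 : A ≤ (D + β * Lc) / a := by
    rw [le_div_iff₀ ha0]
    linarith [hAa]
  have s2 : (D + β * Lc) / a = D / a + (β / a) * Lc := by ring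
  have s3 : D / a ≤ 2 * D / β := by
    rw [div_le_div_iff₀ ha0 (by linarith : (0:ℝ) < β)]
    nlinarith
  have s4 : (β / a) * Lc ≤ Lc + β * n := by
    have hba : β / a ≤ 1 + β := by
      rw [div_le_iff₀ ha0]
      linarith [h4, mul_comm a (1 + β)]
    calc (β / a) * Lc ≤ (1 + β) * Lc := mul_le_mul_of_nonneg_right hba hLc0
      _ = Lc + β * Lc := by ring
      _ ≤ Lc + β * n := by nlinarith
  calc A ≤ (D + β * Lc) / a := s1
    _ = D / a + (β / a) * Lc := s2
    _ ≤ 2 * D / β + (Lc + β * n) := by linarith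
    _ = Lc + 2 * D / β + β * n := by ring

noncomputable def pvec {d : ℕ} (β : ℝ) (L : Fin d → ℝ) (c : Fin d) : ℝ :=
  Real.exp (-β * L c) / ∑ c', Real.exp (-β * L c')

variable {k d : ℕ} {𝒴 : Fin k → Type}

noncomputable def tauF (lj : (j : Fin k) → ℝ → 𝒴 j → ℝ) (β : ℝ)
    (s : (Fin d → EuclideanSpace ℝ (Fin k)) × (Fin d → ℝ))
    (e : Matrix (Fin k) (Fin d) ℝ × ((j : Fin k) → 𝒴 j)) : Fin k → ℝ :=
  fun j => subg (fun z => lj j z (e.2 j)) (∑ c, (pvec β s.2 c * s.1 c j) * e.1 j c)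

noncomputable def gF (τ : Fin k → ℝ) (Xm : Matrix (Fin k) (Fin d) ℝ) (c : Fin d) :
    EuclideanSpace ℝ (Fin k) :=
  WithLp.toLp 2 (fun j => τ j * Xm j c)

noncomputable def stepF (lj : (j : Fin k) → ℝ → 𝒴 j → ℝ) (β η M W₀ : ℝ)
    (s : (Fin d → EuclideanSpace ℝ (Fin k)) × (Fin d → ℝ))
    (e : Matrix (Fin k) (Fin d) ℝ × ((j : Fin k) → 𝒴 j)) :
    (Fin d → EuclideanSpace ℝ (Fin k)) × (Fin d → ℝ) :=
  (fun c => projB W₀ (s.1 c - η • gF (tauF lj β s e) e.1 c),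
   fun c => s.2 c + ((∑ j, tauF lj β s e j * e.1 j c * s.1 c j) + M) / (2 * M))

noncomputable def stateAt (lj : (j : Fin k) → ℝ → 𝒴 j → ℝ) (β η M W₀ : ℝ) :
    (t : ℕ) → (Fin t → Matrix (Fin k) (Fin d) ℝ × ((j : Fin k) → 𝒴 j)) →
      (Fin d → EuclideanSpace ℝ (Fin k)) × (Fin d → ℝ)
  | 0, _ => (fun _ => 0, fun _ => 0)
  | (t+1), h => stepF lj β η M W₀
      (stateAt lj β η M W₀ t (fun s => h s.castSucc)) (h (Fin.last t))

noncomputable def play (lj : (j : Fin k) → ℝ → 𝒴 j → ℝ) (β η M W₀ : ℝ)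
    (t : ℕ) (h : Fin t → Matrix (Fin k) (Fin d) ℝ × ((j : Fin k) → 𝒴 j)) :
    Matrix (Fin k) (Fin d) ℝ :=
  fun j c => pvec β (stateAt lj β η M W₀ t h).2 c * (stateAt lj β η M W₀ t h).1 c j

lemma main_branch (k d : ℕ) (𝒴 : Fin k → Type) (lj : (j : Fin k) → ℝ → 𝒴 j → ℝ)
    (ρ W₀ X : ℝ) (n : ℕ) (hk : 1 ≤ k) (hd : 3 ≤ d)
    (hlip : ∀ (j : Fin k) (y : 𝒴 j) (a b : ℝ), |lj j a y - lj j b y| ≤ ρ * |a - b|)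
    (hconv : ∀ (j : Fin k) (y : 𝒴 j), ConvexOn ℝ Set.univ fun a : ℝ => lj j a y)
    (hW₀ : 0 < W₀) (hX : 0 < X) (hn : 0 < n) (hρ : 0 < ρ)
    (β η M : ℝ)
    (hβdef : β = Real.sqrt (Real.log d / n))
    (hηdef : η = W₀ / (ρ * X * Real.sqrt n))
    (hMdef : M = ρ * X * W₀)
    (hβhalf : β ≤ 1/2)
    (ex : Fin n → Matrix (Fin k) (Fin d) ℝ × ((j : Fin k) → 𝒴 j))
    (hXb : ∀ (t : Fin n) (c : Fin d), col2 (ex t).1 c ≤ X) :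
    (∀ t : Fin n,
        grpNorm21 (play lj β η M W₀ t.1 fun s : Fin t.1 => ex (Fin.castLE t.isLt.le s)) ≤ W₀) ∧
      ∀ U : Matrix (Fin k) (Fin d) ℝ, grpNorm21 U ≤ W₀ →
        (1 / n : ℝ) * (∑ t : Fin n, ∑ j,
              lj j (∑ c, (play lj β η M W₀ t.1 fun s : Fin t.1 => ex (Fin.castLE t.isLt.le s)) j c
                  * (ex t).1 j c)
                ((ex t).2 j))
            - (1 / n : ℝ) * (∑ t : Fin n, ∑ j,
              lj j (∑ c, U j c * (ex t).1 j c) ((ex t).2 j)) ≤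
          7 * ρ * X * W₀ * Real.sqrt (Real.log d / n) := by
  classical
  have hn' : (0:ℝ) < n := by exact_mod_cast hn
  have hd' : (3:ℝ) ≤ d := by exact_mod_cast hd
  set D := Real.log d with hD
  have hD1 : 1 ≤ D := by
    rw [hD, Real.le_log_iff_exp_le (by linarith : (0:ℝ) < (d:ℝ))]
    calc Real.exp 1 ≤ 2.7182818286 := (Real.exp_one_lt_d9).le
      _ ≤ 3 := by norm_num
      _ ≤ (d:ℝ) := hd'
  have hD0 : 0 < D := by linarith
  have hβ0 : 0 < β := by rw [hβdef]; positivity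
  have hM0 : 0 < M := by rw [hMdef]; positivity
  have hη0 : 0 < η := by rw [hηdef]; positivity
  -- trajectory
  set ext : ℕ → Matrix (Fin k) (Fin d) ℝ × ((j : Fin k) → 𝒴 j) :=
    fun t => if h : t < n then ex ⟨t, h⟩ else ex ⟨0, hn⟩ with hext
  set S := fun t => stateAt lj β η M W₀ t (fun s : Fin t => ext s.1) with hSdef
  have hSsucc : ∀ t, S (t+1) = stepF lj β η M W₀ (S t) (ext t) := fun t => rfl
  set v : ℕ → Fin d → EuclideanSpace ℝ (Fin k) := fun t => (S t).1 with hvdef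
  set Lq : ℕ → Fin d → ℝ := fun t => (S t).2 with hLqdef
  set p : ℕ → Fin d → ℝ := fun t => pvec β (Lq t) with hpdef
  set τ : ℕ → Fin k → ℝ := fun t => tauF lj β (S t) (ext t) with hτdef
  set g : ℕ → Fin d → EuclideanSpace ℝ (Fin k) := fun t c => gF (τ t) (ext t).1 c with hgdef
  set ℓ : ℕ → Fin d → ℝ := fun t c => ∑ j, τ t j * (ext t).1 j c * v t c j with hℓdef
  set ℓ' : ℕ → Fin d → ℝ := fun t c => (ℓ t c + M) / (2*M) with hℓ'def
  set ap : ℕ → Fin k → ℝ := fun t j => ∑ c, (p t c * v t c j) * (ext t).1 j c with hapdef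
  have hvstep : ∀ t c, v (t+1) c = projB W₀ (v t c - η • g t c) := by
    intro t c
    show (S (t+1)).1 c = _
    rw [hSsucc t]
    rfl
  have hLqstep : ∀ t c, Lq (t+1) c = Lq t c + ℓ' t c := by
    intro t c
    show (S (t+1)).2 c = _
    rw [hSsucc t]
    show (S t).2 c + ((∑ j, τ t j * (ext t).1 j c * (S t).1 c j) + M) / (2*M) = _
    rfl
  have hτeq : ∀ t j, τ t j = subg (fun z => lj j z ((ext t).2 j)) (ap t j) := fun t j => rfl
  have hv0 : ∀ c, v 0 c = 0 := fun c => rfl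
  -- norm bounds
  have hvW : ∀ t c, ‖v t c‖ ≤ W₀ := by
    intro t
    induction t with
    | zero => intro c; rw [hv0 c, norm_zero]; exact hW₀.le
    | succ q _ => intro c; rw [hvstep q c]; exact projB_norm_le W₀ hW₀.le _
  have hτρ : ∀ t j, |τ t j| ≤ ρ :=
    fun t j => (subg_spec _ ρ (fun a b => hlip j ((ext t).2 j) a b)
      (hconv j ((ext t).2 j)) (ap t j)).1
  have hsubg : ∀ t j (b : ℝ),
      lj j (ap t j) ((ext t).2 j) - lj j b ((ext t).2 j) ≤ τ t j * (ap t j - b) := by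
    intro t j b
    have h := (subg_spec _ ρ (fun a b => hlip j ((ext t).2 j) a b)
      (hconv j ((ext t).2 j)) (ap t j)).2 b
    rw [hτeq t j]
    nlinarith [h]
  have hXcol : ∀ t, t < n → ∀ c, col2 (ext t).1 c ≤ X := by
    intro t ht c
    have : ext t = ex ⟨t, ht⟩ := by rw [hext]; simp only; rw [dif_pos ht]
    rw [this]; exact hXb _ c
  have hgX : ∀ t, t < n → ∀ c, ‖g t c‖ ≤ ρ * X := by
    intro t ht c
    have h1 : ‖g t c‖ = Real.sqrt (∑ j, (τ t j * (ext t).1 j c)^2) := by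
      rw [hgdef]
      simp only [gF]
      rw [EuclideanSpace.norm_eq]
      congr 1
      refine Finset.sum_congr rfl (fun j _ => ?_)
      rw [Real.norm_eq_abs, sq_abs]
    rw [h1]
    have h2 : ∑ j, (τ t j * (ext t).1 j c)^2 ≤ ρ^2 * ∑ j, ((ext t).1 j c)^2 := by
      rw [Finset.mul_sum]
      refine Finset.sum_le_sum (fun j _ => ?_)
      have h3 : (τ t j)^2 ≤ ρ^2 := by
        nlinarith [hτρ t j, abs_nonneg (τ t j), sq_abs (τ t j)]
      calc (τ t j * (ext t).1 j c)^2 = (τ t j)^2 * ((ext t).1 j c)^2 := by ring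
        _ ≤ ρ^2 * ((ext t).1 j c)^2 :=
            mul_le_mul_of_nonneg_right h3 (sq_nonneg _)
    calc Real.sqrt (∑ j, (τ t j * (ext t).1 j c)^2)
        ≤ Real.sqrt (ρ^2 * ∑ j, ((ext t).1 j c)^2) := Real.sqrt_le_sqrt h2
      _ = ρ * col2 (ext t).1 c := by
          rw [Real.sqrt_mul (sq_nonneg ρ), Real.sqrt_sq hρ.le, col2]
      _ ≤ ρ * X := mul_le_mul_of_nonneg_left (hXcol t ht c) hρ.le
  have hinner : ∀ t c, ℓ t c = (inner ℝ (g t c) (v t c) : ℝ) := by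
    intro t c
    rw [PiLp.inner_apply]
    simp only [RCLike.inner_apply, conj_trivial]
    exact Finset.sum_congr rfl (fun j _ => by simp only [hgdef, gF, WithLp.ofLp_toLp]; ring)
  have hℓM : ∀ t, t < n → ∀ c, |ℓ t c| ≤ M := by
    intro t ht c
    rw [hinner t c, hMdef]
    calc |(inner ℝ (g t c) (v t c) : ℝ)| ≤ ‖g t c‖ * ‖v t c‖ := abs_real_inner_le_norm _ _
      _ ≤ (ρ * X) * W₀ := mul_le_mul (hgX t ht c) (hvW t c) (norm_nonneg _)
          (by positivity)
      _ = ρ * X * W₀ := by ring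
  have hℓ'01 : ∀ t c, t < n → 0 ≤ ℓ' t c ∧ ℓ' t c ≤ 1 := by
    intro t c ht
    have := hℓM t ht c
    have h2 := abs_le.1 this
    constructor
    · apply div_nonneg (by linarith) (by linarith)
    · rw [div_le_one (by linarith)]; linarith
  have hLqsum : ∀ t c, Lq t c = ∑ s ∈ range t, ℓ' s c := by
    intro t
    induction t with
    | zero => intro c; simp; rfl
    | succ q ih =>
      intro c
      rw [hLqstep q c, Finset.sum_range_succ, ih c]
  have hZpos : ∀ t, (0:ℝ) < ∑ c', Real.exp (-β * Lq t c') :=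
    fun t => Finset.sum_pos (fun c _ => Real.exp_pos _)
      (univ_nonempty_iff.2 ⟨⟨0, by omega⟩⟩)
  have hppos : ∀ t c, 0 < p t c := fun t c =>
    div_pos (Real.exp_pos _) (hZpos t)
  have hpsum : ∀ t, ∑ c, p t c = 1 := by
    intro t
    rw [hpdef]
    simp only [pvec]
    rw [← Finset.sum_div, div_self (hZpos t).ne']
  have hnormE : ∀ (x : EuclideanSpace ℝ (Fin k)), ‖x‖ = Real.sqrt (∑ i, (x i)^2) := by
    intro x
    rw [EuclideanSpace.norm_eq]
    congr 1
    exact Finset.sum_congr rfl (fun i _ => by rw [Real.norm_eq_abs, sq_abs])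
  have hplay : ∀ t : Fin n,
      (play lj β η M W₀ t.1 fun s : Fin t.1 => ex (Fin.castLE t.isLt.le s))
        = fun j c => p t.1 c * v t.1 c j := by
    intro t
    have hfun : (fun s : Fin t.1 => ex (Fin.castLE t.isLt.le s))
        = (fun s : Fin t.1 => ext s.1) := by
      funext s
      rw [hext]
      simp only
      rw [dif_pos (lt_of_lt_of_le s.2 t.isLt.le)]
      rfl
    show (fun j c => pvec β (stateAt lj β η M W₀ t.1 _).2 c
      * (stateAt lj β η M W₀ t.1 _).1 c j) = _
    rw [hfun]
  have hcolW : ∀ (t : ℕ) (c : Fin d),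
      col2 (fun j c' => p t c' * v t c' j) c = p t c * ‖v t c‖ := by
    intro t c
    unfold col2; rw [hnormE]
    rw [show (∑ i, (p t c * v t c i)^2) = (p t c)^2 * ∑ i, (v t c i)^2 from by
      rw [Finset.mul_sum]; exact Finset.sum_congr rfl (fun i _ => by ring)]
    rw [Real.sqrt_mul (sq_nonneg _), Real.sqrt_sq (hppos t c).le]
  have feas : ∀ t : Fin n,
      grpNorm21 (play lj β η M W₀ t.1 fun s : Fin t.1 => ex (Fin.castLE t.isLt.le s)) ≤ W₀ := by
    intro t
    rw [hplay t]; unfold grpNorm21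
    calc ∑ c, col2 (fun j c' => p t.1 c' * v t.1 c' j) c
        = ∑ c, p t.1 c * ‖v t.1 c‖ := Finset.sum_congr rfl (fun c _ => hcolW t.1 c)
      _ ≤ ∑ c, p t.1 c * W₀ := Finset.sum_le_sum (fun c _ =>
          mul_le_mul_of_nonneg_left (hvW t.1 c) (hppos t.1 c).le)
      _ = W₀ := by rw [← Finset.sum_mul, hpsum t.1, one_mul]
  refine ⟨feas, ?_⟩
  intro U hU
  set Ucol : Fin d → EuclideanSpace ℝ (Fin k) := fun c => WithLp.toLp 2 (fun j => U j c) with hUcol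
  set bp : ℕ → Fin k → ℝ := fun t j => ∑ c, U j c * (ext t).1 j c with hbp
  have hinnerU : ∀ t c, (inner ℝ (g t c) (Ucol c) : ℝ) = ∑ j, (τ t j * (ext t).1 j c) * U j c := by
    intro t c
    rw [PiLp.inner_apply]
    simp only [RCLike.inner_apply, conj_trivial]
    exact Finset.sum_congr rfl (fun j _ => by simp only [hgdef, hUcol, gF, WithLp.ofLp_toLp]; ring)
  have hstepA : ∀ t, t < n →
      (∑ j, lj j (ap t j) ((ext t).2 j)) - (∑ j, lj j (bp t j) ((ext t).2 j))
        ≤ (∑ c, p t c * ℓ t c) - ∑ c, (inner ℝ (g t c) (Ucol c) : ℝ) := by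
    intro t _
    have e1 : ∑ j, τ t j * ap t j = ∑ c, p t c * ℓ t c := by
      simp only [hapdef, Finset.mul_sum]
      rw [Finset.sum_comm]
      refine Finset.sum_congr rfl (fun c _ => ?_)
      simp only [hℓdef, Finset.mul_sum]
      exact Finset.sum_congr rfl (fun j _ => by ring)
    have e2 : ∑ j, τ t j * bp t j = ∑ c, (inner ℝ (g t c) (Ucol c) : ℝ) := by
      simp only [hinnerU, hbp, Finset.mul_sum]
      rw [Finset.sum_comm]
      exact Finset.sum_congr rfl (fun c _ => Finset.sum_congr rfl (fun j _ => by ring))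
    calc (∑ j, lj j (ap t j) ((ext t).2 j)) - (∑ j, lj j (bp t j) ((ext t).2 j))
        = ∑ j, (lj j (ap t j) ((ext t).2 j) - lj j (bp t j) ((ext t).2 j)) := by
          rw [Finset.sum_sub_distrib]
      _ ≤ ∑ j, τ t j * (ap t j - bp t j) :=
          Finset.sum_le_sum (fun j _ => hsubg t j (bp t j))
      _ = (∑ j, τ t j * ap t j) - ∑ j, τ t j * bp t j := by
          rw [← Finset.sum_sub_distrib]
          exact Finset.sum_congr rfl (fun j _ => by ring)
      _ = _ := by rw [e1, e2]
  set Sv : Fin d → EuclideanSpace ℝ (Fin k) := fun c => ∑ t ∈ range n, g t c with hSv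
  have hsumU : ∑ c, (inner ℝ (Sv c) (Ucol c) : ℝ)
      = ∑ t ∈ range n, ∑ c, (inner ℝ (g t c) (Ucol c) : ℝ) := by
    rw [Finset.sum_comm]
    exact Finset.sum_congr rfl (fun c _ => by rw [hSv]; exact sum_inner _ _ _)
  have hstepAsum :
      (∑ t ∈ range n, ∑ j, lj j (ap t j) ((ext t).2 j))
        - (∑ t ∈ range n, ∑ j, lj j (bp t j) ((ext t).2 j))
      ≤ (∑ t ∈ range n, ∑ c, p t c * ℓ t c) - ∑ c, (inner ℝ (Sv c) (Ucol c) : ℝ) := by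
    rw [hsumU, ← Finset.sum_sub_distrib, ← Finset.sum_sub_distrib]
    exact Finset.sum_le_sum (fun t ht => hstepA t (mem_range.1 ht))
  -- maximal column
  have hfinNe : (univ : Finset (Fin d)).Nonempty := ⟨⟨0, by omega⟩, mem_univ _⟩
  obtain ⟨cs, _, hcs⟩ := Finset.exists_max_image univ (fun c => ‖Sv c‖) hfinNe
  -- hedge bound
  have hpeq : ∀ (t : ℕ) (c : Fin d),
      (Real.exp (-β * ∑ s ∈ range t, ℓ' s c) /
        ∑ c', Real.exp (-β * ∑ s ∈ range t, ℓ' s c')) = p t c := by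
    intro t c
    simp only [← hLqsum]
    rfl
  have hedge1 : ∑ t ∈ range n, ∑ c, p t c * ℓ' t c
      ≤ (∑ s ∈ range n, ℓ' s cs) + 2 * D / β + β * n := by
    have h0 := hedge_regret d n (by omega) β hβ0 hβhalf ℓ' (fun t c ht => hℓ'01 t c ht) cs
    calc ∑ t ∈ range n, ∑ c, p t c * ℓ' t c
        = ∑ t ∈ range n, ∑ c, (Real.exp (-β * ∑ s ∈ range t, ℓ' s c) /
            ∑ c', Real.exp (-β * ∑ s ∈ range t, ℓ' s c')) * ℓ' t c :=
          Finset.sum_congr rfl (fun t _ => Finset.sum_congr rfl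
            (fun c _ => by rw [hpeq t c]))
      _ ≤ (∑ s ∈ range n, ℓ' s cs) + 2 * Real.log d / β + β * n := h0
      _ = (∑ s ∈ range n, ℓ' s cs) + 2 * D / β + β * n := by rw [← hD]
  have hunscale : ∀ t, ∑ c, p t c * ℓ' t c = ((∑ c, p t c * ℓ t c) + M) / (2*M) := by
    intro t
    rw [eq_div_iff (by positivity : (2*M : ℝ) ≠ 0), Finset.sum_mul]
    have e : ∀ c : Fin d, p t c * ℓ' t c * (2*M) = p t c * ℓ t c + M * p t c := by
      intro c
      rw [hℓ'def]
      simp only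
      field_simp
    rw [Finset.sum_congr rfl (fun c _ => e c), Finset.sum_add_distrib, ← Finset.mul_sum,
      hpsum t]
    ring
  have hHtot : (∑ t ∈ range n, ∑ c, p t c * ℓ t c)
      ≤ (∑ t ∈ range n, ℓ t cs) + 2*M*(2*D/β + β*n) := by
    have lhs : ∑ t ∈ range n, ∑ c, p t c * ℓ' t c
        = ((∑ t ∈ range n, ∑ c, p t c * ℓ t c) + n * M) / (2*M) := by
      rw [Finset.sum_congr rfl (fun t _ => hunscale t), ← Finset.sum_div,
        Finset.sum_add_distrib, Finset.sum_const, card_range, nsmul_eq_mul]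
    have rhs : ∑ s ∈ range n, ℓ' s cs
        = ((∑ s ∈ range n, ℓ s cs) + n * M) / (2*M) := by
      rw [hℓ'def]
      simp only
      rw [← Finset.sum_div, Finset.sum_add_distrib, Finset.sum_const, card_range,
        nsmul_eq_mul]
    rw [lhs, rhs] at hedge1
    rw [div_le_iff₀ (by positivity : (0:ℝ) < 2*M)] at hedge1
    have e2 : (((∑ s ∈ range n, ℓ s cs) + n*M) / (2*M) + 2*D/β + β*n) * (2*M)
        = ((∑ s ∈ range n, ℓ s cs) + n*M) + (2*D/β + β*n) * (2*M) := by
      rw [add_mul, add_mul, div_mul_cancel₀ _ (by positivity : (2*M:ℝ) ≠ 0)]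
      ring
    rw [e2] at hedge1
    linarith
  -- OGD bound for column cs
  set us : EuclideanSpace ℝ (Fin k) := -((W₀ / ‖Sv cs‖) • Sv cs) with hus
  have hus_norm : ‖us‖ ≤ W₀ := by
    by_cases h : Sv cs = 0
    · rw [hus, h]
      simp
      exact hW₀.le
    · rw [hus, norm_neg, norm_smul, Real.norm_eq_abs, abs_div, abs_of_nonneg hW₀.le,
        abs_of_nonneg (norm_nonneg _), div_mul_cancel₀ _ (norm_ne_zero_iff.2 h)]
  have hus_inner : (inner ℝ (Sv cs) us : ℝ) = -(W₀ * ‖Sv cs‖) := by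
    by_cases h : Sv cs = 0
    · rw [hus, h]; simp
    · rw [hus, inner_neg_right, real_inner_smul_right, real_inner_self_eq_norm_sq]
      have : ‖Sv cs‖ ≠ 0 := norm_ne_zero_iff.2 h
      field_simp
  have hogd := ogd_regret n W₀ η (ρ*X) hW₀.le hη0 (by positivity)
    (fun t => g t cs) (fun t => v t cs) (hv0 cs) (fun t _ => hvstep t cs)
    (fun t ht => hgX t ht cs) us hus_norm
  have hLcs : (∑ t ∈ range n, ℓ t cs)
      ≤ -(W₀ * ‖Sv cs‖) + (W₀^2/(2*η) + η*n*(ρ*X)^2/2) := by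
    have e : ∑ t ∈ range n, (inner ℝ (g t cs) (v t cs - us) : ℝ)
        = (∑ t ∈ range n, ℓ t cs) - (inner ℝ (Sv cs) us : ℝ) := by
      rw [hSv]
      simp only
      rw [sum_inner, ← Finset.sum_sub_distrib]
      exact Finset.sum_congr rfl (fun t _ => by
        rw [inner_sub_right, hinner t cs])
    rw [e, hus_inner] at hogd
    linarith
  -- comparator term
  have hUcolnorm : ∀ c, ‖Ucol c‖ = col2 U c := by
    intro c
    rw [hnormE, col2]
  have hTU : -(∑ c, (inner ℝ (Sv c) (Ucol c) : ℝ)) ≤ W₀ * ‖Sv cs‖ := by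
    have h1 : ∀ c, -(inner ℝ (Sv c) (Ucol c) : ℝ) ≤ ‖Sv cs‖ * ‖Ucol c‖ := by
      intro c
      have := abs_real_inner_le_norm (Sv c) (Ucol c)
      have h2 := hcs c (mem_univ c)
      have h3 : ‖Sv c‖ * ‖Ucol c‖ ≤ ‖Sv cs‖ * ‖Ucol c‖ :=
        mul_le_mul_of_nonneg_right h2 (norm_nonneg _)
      have h4 := neg_abs_le (inner ℝ (Sv c) (Ucol c) : ℝ)
      linarith [abs_le.1 this]
    calc -(∑ c, (inner ℝ (Sv c) (Ucol c) : ℝ)) = ∑ c, -(inner ℝ (Sv c) (Ucol c) : ℝ) := by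
          rw [Finset.sum_neg_distrib]
      _ ≤ ∑ c, ‖Sv cs‖ * ‖Ucol c‖ := Finset.sum_le_sum (fun c _ => h1 c)
      _ = ‖Sv cs‖ * ∑ c, col2 U c := by
          rw [← Finset.mul_sum]
          congr 1
          exact Finset.sum_congr rfl (fun c _ => hUcolnorm c)
      _ ≤ ‖Sv cs‖ * W₀ := mul_le_mul_of_nonneg_left hU (norm_nonneg _)
      _ = W₀ * ‖Sv cs‖ := by ring
  -- numerics
  set sD := Real.sqrt D with hsDdef
  set sn := Real.sqrt (n:ℝ) with hsndef
  have hsn : sn * sn = (n:ℝ) := Real.mul_self_sqrt hn'.le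
  have hsD : sD * sD = D := Real.mul_self_sqrt hD0.le
  have hsn0 : 0 < sn := Real.sqrt_pos.2 hn'
  have hsD0 : 0 < sD := Real.sqrt_pos.2 hD0
  have hsD1 : 1 ≤ sD := by
    rw [hsDdef, show (1:ℝ) = Real.sqrt 1 from Real.sqrt_one.symm]
    exact Real.sqrt_le_sqrt hD1
  have hβeq : β = sD / sn := by
    rw [hβdef, Real.sqrt_div hD0.le]
  have hRogd : W₀^2/(2*η) + η*n*(ρ*X)^2/2 = ρ*X*W₀*sn := by
    rw [hηdef, ← hsn]
    field_simp
    ring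
  have hβnum : 2*M*(2*D/β + β*n) = 6*M*(sD*sn) := by
    rw [hβeq, ← hsD, ← hsn]
    field_simp
    ring
  have htotal : (∑ t ∈ range n, ∑ j, lj j (ap t j) ((ext t).2 j))
      - (∑ t ∈ range n, ∑ j, lj j (bp t j) ((ext t).2 j))
      ≤ 7*ρ*X*W₀*(sD*sn) := by
    have h6 : sn ≤ sD * sn := by nlinarith [hsD1, hsn0.le]
    have h7 : ρ*X*W₀*sn ≤ ρ*X*W₀*(sD*sn) :=
      mul_le_mul_of_nonneg_left h6 (by positivity)
    calc (∑ t ∈ range n, ∑ j, lj j (ap t j) ((ext t).2 j))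
        - (∑ t ∈ range n, ∑ j, lj j (bp t j) ((ext t).2 j))
        ≤ (∑ t ∈ range n, ∑ c, p t c * ℓ t c) - ∑ c, (inner ℝ (Sv c) (Ucol c) : ℝ) :=
          hstepAsum
      _ ≤ ((∑ t ∈ range n, ℓ t cs) + 2*M*(2*D/β + β*n))
            - ∑ c, (inner ℝ (Sv c) (Ucol c) : ℝ) := by linarith [hHtot]
      _ ≤ ((-(W₀ * ‖Sv cs‖) + (W₀^2/(2*η) + η*n*(ρ*X)^2/2)) + 2*M*(2*D/β + β*n))
            - ∑ c, (inner ℝ (Sv c) (Ucol c) : ℝ) := by linarith [hLcs]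
      _ ≤ (W₀^2/(2*η) + η*n*(ρ*X)^2/2) + 2*M*(2*D/β + β*n) := by linarith [hTU]
      _ = ρ*X*W₀*sn + 6*M*(sD*sn) := by rw [hRogd, hβnum]
      _ ≤ 7*ρ*X*W₀*(sD*sn) := by
          rw [hMdef]
          linarith [h7]
  -- final goal assembly
  have hext' : ∀ t : Fin n, ext t.1 = ex t := by
    intro t
    rw [hext]
    simp only
    rw [dif_pos t.2]
  have hA1 : (∑ t : Fin n, ∑ j, lj j
        (∑ c, (play lj β η M W₀ t.1 fun s : Fin t.1 => ex (Fin.castLE t.isLt.le s)) j c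
          * (ex t).1 j c) ((ex t).2 j))
      = ∑ t ∈ range n, ∑ j, lj j (ap t j) ((ext t).2 j) := by
    rw [← Fin.sum_univ_eq_sum_range (fun t => ∑ j, lj j (ap t j) ((ext t).2 j)) n]
    refine Finset.sum_congr rfl (fun t _ => ?_)
    rw [hplay t, ← hext' t]
  have hA2 : (∑ t : Fin n, ∑ j, lj j (∑ c, U j c * (ex t).1 j c) ((ex t).2 j))
      = ∑ t ∈ range n, ∑ j, lj j (bp t j) ((ext t).2 j) := by
    rw [← Fin.sum_univ_eq_sum_range (fun t => ∑ j, lj j (bp t j) ((ext t).2 j)) n]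
    refine Finset.sum_congr rfl (fun t _ => ?_)
    rw [← hext' t]
  rw [hA1, hA2]
  have hsqrtDn : Real.sqrt (D/(n:ℝ)) = sD/sn := hβdef ▸ hβeq
  calc (1/(n:ℝ)) * (∑ t ∈ range n, ∑ j, lj j (ap t j) ((ext t).2 j))
      - (1/(n:ℝ)) * (∑ t ∈ range n, ∑ j, lj j (bp t j) ((ext t).2 j))
      = (1/(n:ℝ)) * ((∑ t ∈ range n, ∑ j, lj j (ap t j) ((ext t).2 j))
        - (∑ t ∈ range n, ∑ j, lj j (bp t j) ((ext t).2 j))) := by ring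
    _ ≤ (1/(n:ℝ)) * (7*ρ*X*W₀*(sD*sn)) := by
        apply mul_le_mul_of_nonneg_left htotal (by positivity)
    _ = 7 * ρ * X * W₀ * Real.sqrt (D/(n:ℝ)) := by
        rw [hsqrtDn, ← hsn]
        field_simp

/-- Online multitask learning with group-norm regularization: `k` tasks over `ℝ^d`, `d ≥ 3`.
Each example is a matrix `X_t ∈ ℝ^{k×d}` of per-task instances (rows) together with labels
`y_t^j`; the loss of `W` is `l_t(W) = ∑_j l^j(⟨w^j, x_t^j⟩, y_t^j)` where each `l^j` is
convex and `ρ`-Lipschitz in its first argument.  For a universal constant `C > 0` there is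
an online algorithm — each play depending only on previously seen examples — whose iterates
stay in `𝒲_{2,1} = {W : ‖W‖_{2,1} ≤ W₀}` and whose average regret against any
`U ∈ 𝒲_{2,1}` is at most `C · ρ · X · W₀ · √(ln d / n)` whenever `‖X_t‖_{2,∞} ≤ X`. -/
theorem stmt16 :
    ∃ C : ℝ, 0 < C ∧
      ∀ (k d : ℕ), 1 ≤ k → 3 ≤ d →
      ∀ (𝒴 : Fin k → Type) (lj : (j : Fin k) → ℝ → 𝒴 j → ℝ) (ρ : ℝ),
        (∀ (j : Fin k) (y : 𝒴 j) (a b : ℝ), |lj j a y - lj j b y| ≤ ρ * |a - b|) →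
        (∀ (j : Fin k) (y : 𝒴 j), ConvexOn ℝ Set.univ fun a : ℝ => lj j a y) →
      ∀ (W₀ X : ℝ), 0 < W₀ → 0 < X →
      ∀ (n : ℕ), 0 < n →
      ∃ A : (t : ℕ) → (Fin t → Matrix (Fin k) (Fin d) ℝ × ((j : Fin k) → 𝒴 j)) →
          Matrix (Fin k) (Fin d) ℝ,
        ∀ ex : Fin n → Matrix (Fin k) (Fin d) ℝ × ((j : Fin k) → 𝒴 j),
          (∀ (t : Fin n) (c : Fin d), col2 (ex t).1 c ≤ X) →
          (∀ t : Fin n,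
              grpNorm21 (A t.1 fun s : Fin t.1 => ex (Fin.castLE t.isLt.le s)) ≤ W₀) ∧
            ∀ U : Matrix (Fin k) (Fin d) ℝ, grpNorm21 U ≤ W₀ →
              (1 / n : ℝ) * (∑ t : Fin n, ∑ j,
                    lj j (∑ c, (A t.1 fun s : Fin t.1 => ex (Fin.castLE t.isLt.le s)) j c
                        * (ex t).1 j c)
                      ((ex t).2 j))
                  - (1 / n : ℝ) * (∑ t : Fin n, ∑ j,
                    lj j (∑ c, U j c * (ex t).1 j c) ((ex t).2 j)) ≤
                C * ρ * X * W₀ * Real.sqrt (Real.log d / n) := by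
  classical
  refine ⟨8, by norm_num, ?_⟩
  intro k d hk hd 𝒴 lj ρ hlip hconv W₀ X hW₀ hX n hn
  by_cases hmain : 0 < ρ ∧ Real.sqrt (Real.log d / n) ≤ 1/2
  · obtain ⟨hρ, hβhalf⟩ := hmain
    refine ⟨play lj (Real.sqrt (Real.log d / n)) (W₀/(ρ*X*Real.sqrt n)) (ρ*X*W₀) W₀, ?_⟩
    intro ex hXb
    obtain ⟨h1, h2⟩ := main_branch k d 𝒴 lj ρ W₀ X n hk hd hlip hconv hW₀ hX hn hρ
      _ _ _ rfl rfl rfl hβhalf ex hXb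
    refine ⟨h1, fun U hU => ?_⟩
    refine le_trans (h2 U hU) ?_
    have hpos : 0 ≤ ρ*X*W₀*Real.sqrt (Real.log d / n) := by positivity
    nlinarith [hpos]
  · -- fallback : play the zero matrix
    refine ⟨fun _ _ => 0, ?_⟩
    intro ex hXb
    have hρ0 : 0 ≤ ρ := by
      have j0 : Fin k := ⟨0, hk⟩
      have y0 := (ex ⟨0, hn⟩).2 j0
      have h := hlip j0 y0 0 1
      have h2 := abs_nonneg (lj j0 0 y0 - lj j0 1 y0)
      rw [show |(0:ℝ) - 1| = 1 by norm_num] at h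
      linarith
    have hgz : grpNorm21 (0 : Matrix (Fin k) (Fin d) ℝ) = 0 := by
      rw [grpNorm21]
      apply Finset.sum_eq_zero
      intro c _
      rw [col2]
      simp
    constructor
    · intro t
      show grpNorm21 (0 : Matrix (Fin k) (Fin d) ℝ) ≤ W₀
      rw [hgz]
      exact hW₀.le
    · intro U hU
      have key : ∀ t : Fin n,
          (∑ j, lj j 0 ((ex t).2 j))
            - ∑ j, lj j (∑ c, U j c * (ex t).1 j c) ((ex t).2 j) ≤ ρ*X*W₀ := by
        intro t
        rw [← Finset.sum_sub_distrib]
        have hj : ∀ j : Fin k, lj j 0 ((ex t).2 j)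
            - lj j (∑ c, U j c * (ex t).1 j c) ((ex t).2 j)
            ≤ ρ * |∑ c, U j c * (ex t).1 j c| := by
          intro j
          have h := hlip j ((ex t).2 j) 0 (∑ c, U j c * (ex t).1 j c)
          have h2 := le_abs_self (lj j 0 ((ex t).2 j)
            - lj j (∑ c, U j c * (ex t).1 j c) ((ex t).2 j))
          rw [zero_sub, abs_neg] at h
          linarith
        calc ∑ j, (lj j 0 ((ex t).2 j)
              - lj j (∑ c, U j c * (ex t).1 j c) ((ex t).2 j))
            ≤ ∑ j, ρ * |∑ c, U j c * (ex t).1 j c| := Finset.sum_le_sum (fun j _ => hj j)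
          _ = ρ * ∑ j, |∑ c, U j c * (ex t).1 j c| := by rw [Finset.mul_sum]
          _ ≤ ρ * (X * W₀) := ?_
          _ = ρ * X * W₀ := by ring
        apply mul_le_mul_of_nonneg_left _ hρ0
        calc ∑ j, |∑ c, U j c * (ex t).1 j c|
            ≤ ∑ j, ∑ c, |U j c| * |(ex t).1 j c| := by
              refine Finset.sum_le_sum (fun j _ => ?_)
              calc |∑ c, U j c * (ex t).1 j c| ≤ ∑ c, |U j c * (ex t).1 j c| :=
                  Finset.abs_sum_le_sum_abs _ _
                _ = ∑ c, |U j c| * |(ex t).1 j c| :=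
                  Finset.sum_congr rfl (fun c _ => abs_mul _ _)
          _ = ∑ c, ∑ j, |U j c| * |(ex t).1 j c| := Finset.sum_comm
          _ ≤ ∑ c, col2 U c * col2 (ex t).1 c := by
              refine Finset.sum_le_sum (fun c _ => ?_)
              have := Real.sum_mul_le_sqrt_mul_sqrt univ
                (fun j => |U j c|) (fun j => |(ex t).1 j c|)
              simp only [sq_abs] at this
              rw [col2, col2]
              exact this
          _ ≤ ∑ c, col2 U c * X := by
              refine Finset.sum_le_sum (fun c _ => ?_)
              exact mul_le_mul_of_nonneg_left (hXb t c) (Real.sqrt_nonneg _)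
          _ = X * grpNorm21 U := by
              rw [grpNorm21, Finset.mul_sum]
              exact Finset.sum_congr rfl (fun c _ => by ring)
          _ ≤ X * W₀ := mul_le_mul_of_nonneg_left hU hX.le
      have final : ρ*X*W₀ ≤ 8 * ρ * X * W₀ * Real.sqrt (Real.log d / n) := by
        rcases eq_or_lt_of_le hρ0 with heq | hρpos
        · rw [← heq]
          simp
        · have hhalf : 1/2 < Real.sqrt (Real.log d / n) := by
            by_contra hcon
            push_neg at hcon
            exact hmain ⟨hρpos, hcon⟩
          have hpos : (0:ℝ) < ρ*X*W₀ := by positivity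
          nlinarith [hpos, hhalf]
      simp only [Matrix.zero_apply, zero_mul, Finset.sum_const_zero]
      have hn' : (0:ℝ) < n := by exact_mod_cast hn
      have hsum : (∑ t : Fin n, ∑ j, lj j 0 ((ex t).2 j))
          - (∑ t : Fin n, ∑ j, lj j (∑ c, U j c * (ex t).1 j c) ((ex t).2 j))
          ≤ n * (ρ*X*W₀) := by
        rw [← Finset.sum_sub_distrib]
        calc ∑ t : Fin n, ((∑ j, lj j 0 ((ex t).2 j))
              - ∑ j, lj j (∑ c, U j c * (ex t).1 j c) ((ex t).2 j))
            ≤ ∑ _t : Fin n, ρ*X*W₀ := Finset.sum_le_sum (fun t _ => key t)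
          _ = n * (ρ*X*W₀) := by
              rw [Finset.sum_const, card_univ, Fintype.card_fin, nsmul_eq_mul]
      calc (1 / n : ℝ) * (∑ t : Fin n, ∑ j, lj j 0 ((ex t).2 j))
          - (1 / n : ℝ) * (∑ t : Fin n, ∑ j,
            lj j (∑ c, U j c * (ex t).1 j c) ((ex t).2 j))
          = (1/n : ℝ) * ((∑ t : Fin n, ∑ j, lj j 0 ((ex t).2 j))
            - ∑ t : Fin n, ∑ j, lj j (∑ c, U j c * (ex t).1 j c) ((ex t).2 j)) := by
            ring
        _ ≤ (1/n : ℝ) * (n * (ρ*X*W₀)) := by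
            apply mul_le_mul_of_nonneg_left hsum (by positivity)
        _ = ρ*X*W₀ := by field_simp
        _ ≤ 8 * ρ * X * W₀ * Real.sqrt (Real.log d / n) := final
end

section
/- Kernel-learning Rademacher bound (finite-sample form): Let G_1, …, G_k be n×n real symmetric positive semidefinite matrices (the Gram matrices of k base kernels on a training set of n points) with all diagonal entries (G_j)_{ii} ≤ B, let γ > 0, and let k ≥ 2. Define the set 𝒱 = { Gα ∈ ℝ^n : G = Σ_{j=1}^k μ_j G_j with μ_j ≥ 0 and Σ_j μ_j = 1, α ∈ ℝ^n with αᵀGα ≤ 1/γ² }. Then E[sup_{v ∈ 𝒱} (1/n) Σ_{i=1}^n ε_i v_i] ≤ e·√(B ln(k)/(γ² n)), where ε_1,…,ε_n are i.i.d. uniform ±1 random variables. -/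
open scoped BigOperators
open Matrix Finset Real

def rade {n : ℕ} (s : Fin n → Bool) (i : Fin n) : ℝ := if s i then 1 else -1

/-- sign vector -/

lemma rade_sq {n : ℕ} (s : Fin n → Bool) (i : Fin n) : rade s i ^ 2 = 1 := by
  unfold rade; split <;> norm_num

/-- x^m ≤ (m/e)^m e^x for x ≥ 0 -/
lemma pow_le_exp_aux (m : ℕ) (hm : 1 ≤ m) (x : ℝ) (hx : 0 ≤ x) :
    x ^ m ≤ (m / Real.exp 1) ^ m * Real.exp x := by
  have hm0 : (0:ℝ) < m := by exact_mod_cast hm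
  have h1 : x * Real.exp 1 / m ≤ Real.exp (x / m) := by
    have := Real.add_one_le_exp (x / m - 1)
    have h2 : x / m ≤ Real.exp (x / m - 1) := by linarith
    rw [Real.exp_sub, le_div_iff₀ (Real.exp_pos 1)] at h2
    calc x * Real.exp 1 / ↑m = x / ↑m * Real.exp 1 := by ring
      _ ≤ _ := h2
  have h3 : (x * Real.exp 1 / m) ^ m ≤ Real.exp (x / m) ^ m :=
    pow_le_pow_left₀ (by positivity) h1 m
  rw [← Real.exp_nat_mul] at h3
  have h4 : (m:ℝ) * (x / m) = x := by field_simp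
  rw [h4] at h3
  have h5 : (x * Real.exp 1 / m) ^ m = x ^ m * (Real.exp 1 / m) ^ m := by
    rw [← mul_pow]; ring_nf
  rw [h5] at h3
  have h6 : (0:ℝ) < (Real.exp 1 / m) ^ m := by positivity
  calc x ^ m = (x ^ m * (Real.exp 1 / m) ^ m) * ((m:ℝ) / Real.exp 1) ^ m := by
        rw [mul_assoc, ← mul_pow]; field_simp; simp
    _ ≤ Real.exp x * ((m:ℝ) / Real.exp 1) ^ m := by
        apply mul_le_mul_of_nonneg_right h3 (by positivity)
    _ = _ := by ring

lemma sum_prod_bool {n : ℕ} (f : Fin n → Bool → ℝ) :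
    ∑ s : Fin n → Bool, ∏ i, f i (s i) = ∏ i, (f i true + f i false) := by
  have := Finset.prod_univ_sum (fun _ : Fin n => (Finset.univ : Finset Bool)) f
  rw [Fintype.piFinset_univ] at this
  rw [← this]
  apply Finset.prod_congr rfl; intro i _
  simp [Fintype.sum_bool]

/-- MGF bound: ∑_s exp(t·⟨a,ε⟩) ≤ 2^n exp(t² c/2) -/
lemma mgf_bound {n : ℕ} (a : Fin n → ℝ) (t : ℝ) :
    ∑ s : Fin n → Bool, Real.exp (t * ∑ i, a i * rade s i)
      ≤ 2 ^ n * Real.exp (t ^ 2 * (∑ i, (a i) ^ 2) / 2) := by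
  have h1 : ∀ s : Fin n → Bool, Real.exp (t * ∑ i, a i * rade s i)
      = ∏ i, Real.exp (t * (a i * rade s i)) := by
    intro s; rw [← Real.exp_sum, ← Finset.mul_sum]
  simp_rw [h1]
  rw [show (fun (s : Fin n → Bool) => ∏ i, Real.exp (t * (a i * rade s i)))
      = fun s => ∏ i, (fun i b => Real.exp (t * (a i * (if b then (1:ℝ) else -1)))) i (s i)
    from rfl]
  rw [sum_prod_bool (fun i b => Real.exp (t * (a i * (if b then (1:ℝ) else -1))))]
  have h2 : ∀ i : Fin n,
      Real.exp (t * (a i * (1:ℝ))) + Real.exp (t * (a i * (-1:ℝ)))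
        ≤ 2 * Real.exp ((t * a i) ^ 2 / 2) := by
    intro i
    have := Real.cosh_le_exp_half_sq (t * a i)
    rw [Real.cosh_eq] at this
    have h3 : Real.exp (t * (a i * 1)) = Real.exp (t * a i) := by ring_nf
    have h4 : Real.exp (t * (a i * -1)) = Real.exp (-(t * a i)) := by ring_nf
    rw [h3, h4]
    linarith
  calc ∏ i, (Real.exp (t * (a i * (if true then (1:ℝ) else -1)))
          + Real.exp (t * (a i * (if false then (1:ℝ) else -1))))
      ≤ ∏ i, 2 * Real.exp ((t * a i) ^ 2 / 2) := by
        apply Finset.prod_le_prod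
        · intro i _; positivity
        · intro i _; simpa using h2 i
    _ = 2 ^ n * Real.exp (t ^ 2 * (∑ i, (a i) ^ 2) / 2) := by
        rw [Finset.prod_mul_distrib, Finset.prod_const, ← Real.exp_sum]
        simp only [Finset.card_univ, Fintype.card_fin]
        congr 1
        rw [Finset.mul_sum, ← Finset.sum_div]
        simp_rw [mul_pow]

lemma khintchine {n : ℕ} (r : ℕ) (hr : 1 ≤ r) (a : Fin n → ℝ) :
    ∑ s : Fin n → Bool, (∑ i, a i * rade s i) ^ (2*r)
      ≤ 2 ^ n * (2 * (2*r/Real.exp 1)^r * (∑ i, (a i)^2)^r) := by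
  set c := ∑ i, (a i)^2 with hc
  have hc0 : 0 ≤ c := by positivity
  rcases eq_or_lt_of_le hc0 with hceq | hcpos
  · -- c = 0 : all a i = 0
    have ha : ∀ i, a i = 0 := by
      intro i
      have h := (Finset.sum_eq_zero_iff_of_nonneg
        (fun i _ => sq_nonneg (a i))).1 hceq.symm i (Finset.mem_univ i)
      exact pow_eq_zero_iff (n := 2) (by norm_num) |>.1 h
    have hz : ∀ s : Fin n → Bool, (∑ i, a i * rade s i) ^ (2*r) = 0 := by
      intro s
      rw [Finset.sum_eq_zero (fun i _ => by rw [ha i, zero_mul])]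
      exact zero_pow (by omega)
    rw [Finset.sum_eq_zero (fun s _ => hz s)]
    positivity
  · set e1 := Real.exp 1 with he1
    have he1p : 0 < e1 := Real.exp_pos 1
    have hrp : (0:ℝ) < r := by exact_mod_cast hr
    set t := Real.sqrt (2*r/c) with htdef
    have ht2 : t^2 = 2*r/c := Real.sq_sqrt (by positivity)
    have ht0 : 0 < t := Real.sqrt_pos.2 (by positivity)
    have htpow : (0:ℝ) < t^(2*r) := by positivity
    rw [← mul_le_mul_iff_of_pos_right htpow]
    have key : ∀ s : Fin n → Bool,
        (∑ i, a i * rade s i) ^ (2*r) * t^(2*r)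
          ≤ (2*r/e1)^(2*r) * (Real.exp (t * ∑ i, a i * rade s i)
              + Real.exp (-t * ∑ i, a i * rade s i)) := by
      intro s
      set S := ∑ i, a i * rade s i with hS
      have habs := pow_le_exp_aux (2*r) (by omega) |t*S| (abs_nonneg _)
      have h1 : |t*S|^(2*r) = S^(2*r) * t^(2*r) := by
        rw [← abs_pow, abs_of_nonneg ((even_two_mul r).pow_nonneg _), mul_pow]
        ring
      have h2 : Real.exp |t*S| ≤ Real.exp (t*S) + Real.exp (-t*S) := by
        rcases abs_cases (t*S) with ⟨h,_⟩ | ⟨h,_⟩ <;> rw [h] <;>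
          [skip; rw [show -(t*S) = -t*S by ring]] <;>
          nlinarith [Real.exp_pos (t*S), Real.exp_pos (-(t*S)), Real.exp_pos (-t*S)]
      calc S^(2*r) * t^(2*r) = |t*S|^(2*r) := h1.symm
        _ ≤ (↑(2*r)/e1)^(2*r) * Real.exp |t*S| := habs
        _ ≤ (2*↑r/e1)^(2*r) * (Real.exp (t*S) + Real.exp (-t*S)) := by
            push_cast
            apply mul_le_mul_of_nonneg_left h2 (by positivity)
    have hsum : (∑ s : Fin n → Bool, (∑ i, a i * rade s i) ^ (2*r)) * t^(2*r)
        ≤ (2*r/e1)^(2*r) * (2^n * Real.exp (t^2*c/2) + 2^n * Real.exp ((-t)^2*c/2)) := by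
      rw [Finset.sum_mul]
      calc ∑ s : Fin n → Bool, (∑ i, a i * rade s i) ^ (2*r) * t^(2*r)
          ≤ ∑ s : Fin n → Bool, (2*r/e1)^(2*r) * (Real.exp (t * ∑ i, a i * rade s i)
              + Real.exp (-t * ∑ i, a i * rade s i)) := Finset.sum_le_sum (fun s _ => key s)
        _ = (2*r/e1)^(2*r) * ((∑ s : Fin n → Bool, Real.exp (t * ∑ i, a i * rade s i))
              + ∑ s : Fin n → Bool, Real.exp (-t * ∑ i, a i * rade s i)) := by
            rw [← Finset.mul_sum, Finset.sum_add_distrib]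
        _ ≤ _ := by
            apply mul_le_mul_of_nonneg_left _ (by positivity)
            exact add_le_add (mgf_bound a t) (mgf_bound a (-t))
    have hexp : Real.exp (t^2*c/2) = e1 ^ r := by
      have : t^2*c/2 = (r:ℝ) := by rw [ht2]; field_simp
      rw [this, he1, ← Real.exp_nat_mul, mul_one]
    have hexp' : Real.exp ((-t)^2*c/2) = e1 ^ r := by rw [neg_sq]; exact hexp
    rw [hexp, hexp'] at hsum
    refine hsum.trans (le_of_eq ?_)
    have htpowval : t^(2*r) = (2*r/c)^r := by rw [pow_mul, ht2]
    rw [htpowval]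
    have hcne : c ≠ 0 := ne_of_gt hcpos
    have he1ne : e1 ≠ 0 := ne_of_gt he1p
    rw [div_pow, div_pow, div_pow, pow_mul e1 2 r]
    field_simp
    ring

lemma herm_symm {n : ℕ} {M : Matrix (Fin n) (Fin n) ℝ} (h : M.IsHermitian)
    (i j : Fin n) : M i j = M j i := by
  have := congr_fun (congr_fun h.eq i) j
  simpa [Matrix.conjTranspose_apply] using this.symm

set_option maxHeartbeats 1000000 in
lemma moment_bound {n : ℕ} (r : ℕ) (hr : 1 ≤ r) {M : Matrix (Fin n) (Fin n) ℝ}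
    (hM : M.PosSemidef) :
    ∑ s : Fin n → Bool, (rade s ⬝ᵥ M *ᵥ rade s) ^ r
      ≤ 2^n * (2 * (2*r/Real.exp 1)^r * (M.trace)^r) := by
  obtain ⟨A, hAsymm, hAA⟩ : ∃ A : Matrix (Fin n) (Fin n) ℝ,
      (∀ i j, A i j = A j i) ∧ A * A = M :=
    by open scoped MatrixOrder in exact ⟨CFC.sqrt M, herm_symm (CFC.sqrt_nonneg M).posSemidef.1, CFC.sqrt_mul_sqrt_self M hM.nonneg⟩
  set S : Fin n → (Fin n → Bool) → ℝ := fun m s => ∑ i, A m i * rade s i with hSdef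
  set c : Fin n → ℝ := fun m => ∑ i, (A m i)^2 with hcdef
  have hc0 : ∀ m, 0 ≤ c m := fun m => by positivity
  -- quadratic form as sum of squares
  have hquad : ∀ s : Fin n → Bool, rade s ⬝ᵥ M *ᵥ rade s = ∑ m, (S m s)^2 := by
    intro s
    have hvm : rade s ᵥ* A = A *ᵥ rade s := by
      ext m
      simp only [Matrix.vecMul, Matrix.mulVec, dotProduct]
      exact Finset.sum_congr rfl (fun i _ => by rw [hAsymm i m]; ring
)
    rw [← hAA, ← Matrix.mulVec_mulVec, Matrix.dotProduct_mulVec, hvm]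
    simp only [dotProduct, Matrix.mulVec, hSdef]
    exact Finset.sum_congr rfl (fun m _ => (sq ((fun m => ∑ i, A m i * rade s i) m)).symm)
  -- trace as sum of c
  have htr : M.trace = ∑ m, c m := by
    rw [← hAA]
    simp only [Matrix.trace, Matrix.diag, Matrix.mul_apply, hcdef]
    exact Finset.sum_congr rfl (fun m _ => Finset.sum_congr rfl
      (fun i _ => by rw [hAsymm i m]; ring))
  set T := ∑ m, c m with hTdef
  have hT0 : 0 ≤ T := Finset.sum_nonneg (fun m _ => hc0 m)
  have hSzero : ∀ m, c m = 0 → ∀ s, S m s = 0 := by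
    intro m hm s
    have ha : ∀ i, A m i = 0 := by
      intro i
      have h := (Finset.sum_eq_zero_iff_of_nonneg
        (fun i _ => sq_nonneg (A m i))).1 hm i (Finset.mem_univ i)
      exact pow_eq_zero_iff (n := 2) (by norm_num) |>.1 h
    simp only [hSdef]
    exact Finset.sum_eq_zero (fun i _ => by rw [ha i, zero_mul])
  rw [htr]
  rcases eq_or_lt_of_le hT0 with hTeq | hTpos
  · -- T = 0
    have hcz : ∀ m, c m = 0 := by
      intro m
      exact (Finset.sum_eq_zero_iff_of_nonneg (fun m _ => hc0 m)).1 hTeq.symm m (Finset.mem_univ m)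
    have : ∀ s : Fin n → Bool, rade s ⬝ᵥ M *ᵥ rade s = 0 := by
      intro s
      rw [hquad s]
      exact Finset.sum_eq_zero (fun m _ => by rw [hSzero m (hcz m) s]; norm_num)
    rw [Finset.sum_eq_zero (fun s _ => by rw [this s]; exact zero_pow (by omega))]
    rw [← hTeq, zero_pow (by omega)]
    norm_num
  · set e1 := Real.exp 1 with he1
    have he1p : 0 < e1 := Real.exp_pos 1
    set y : Fin n → (Fin n → Bool) → ℝ :=
      fun m s => if c m = 0 then 0 else (S m s)^2 / c m with hydef
    have hy0 : ∀ m s, 0 ≤ y m s := by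
      intro m s; simp only [hydef]
      split
      · exact le_refl 0
      · positivity
    have hcy : ∀ m s, c m * y m s = (S m s)^2 := by
      intro m s; simp only [hydef]
      split
      · rename_i h; rw [hSzero m h s]; norm_num
      · rename_i h; field_simp
    have hw1 : ∑ m, c m / T = 1 := by
      rw [← Finset.sum_div, ← hTdef]
      exact div_self (ne_of_gt hTpos)
    -- pointwise Jensen
    have hjen : ∀ s : Fin n → Bool,
        (rade s ⬝ᵥ M *ᵥ rade s) ^ r ≤ T^(r-1) * ∑ m, c m * (y m s)^r := by
      intro s
      have hj := (convexOn_pow (𝕜 := ℝ) r).map_sum_le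
        (t := Finset.univ) (w := fun m => c m / T) (p := fun m => y m s)
        (fun m _ => by positivity) hw1 (fun m _ => Set.mem_Ici.2 (hy0 m s))
      simp only [smul_eq_mul] at hj
      have hmean : ∑ m, (c m / T) * y m s = (rade s ⬝ᵥ M *ᵥ rade s) / T := by
        calc ∑ m, (c m / T) * y m s = ∑ m, (c m * y m s)/T :=
              Finset.sum_congr rfl (fun m _ => by ring)
          _ = (∑ m, c m * y m s)/T := by rw [Finset.sum_div]
          _ = (rade s ⬝ᵥ M *ᵥ rade s)/T := by
              rw [hquad s]
              congr 1
              exact Finset.sum_congr rfl (fun m _ => hcy m s)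
      have hmean' : ∑ m, (c m / T) * (y m s)^r = (∑ m, c m * (y m s)^r) / T := by
        calc ∑ m, (c m / T) * (y m s)^r = ∑ m, (c m * (y m s)^r)/T :=
              Finset.sum_congr rfl (fun m _ => by ring)
          _ = (∑ m, c m * (y m s)^r)/T := by rw [Finset.sum_div]
      rw [hmean, hmean'] at hj
      have hTr : (0:ℝ) < T^r := by positivity
      have key : (rade s ⬝ᵥ M *ᵥ rade s)^r = T^r * ((rade s ⬝ᵥ M *ᵥ rade s)/T)^r := by
        rw [div_pow]; field_simp
      rw [key]
      calc T^r * ((rade s ⬝ᵥ M *ᵥ rade s)/T)^r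
          ≤ T^r * ((∑ m, c m * (y m s)^r) / T) := by
            apply mul_le_mul_of_nonneg_left hj (le_of_lt hTr)
        _ = T^(r-1) * ∑ m, c m * (y m s)^r := by
            have hre : T^r = T^(r-1) * T := by rw [← pow_succ]; congr 1; omega
            have hcan : T * ((∑ m, c m * (y m s)^r)/T) = ∑ m, c m * (y m s)^r := by
              field_simp
            rw [hre, mul_assoc, hcan]
    -- sum over s and apply khintchine
    have hym : ∀ m, c m * (∑ s : Fin n → Bool, (y m s)^r)
        ≤ c m * (2^n * (2 * (2*r/e1)^r)) := by
      intro m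
      rcases eq_or_lt_of_le (hc0 m) with hcm | hcm
      · rw [← hcm]; norm_num
      · apply mul_le_mul_of_nonneg_left _ (hc0 m)
        have hyr : ∀ s, (y m s)^r = (S m s)^(2*r) / (c m)^r := by
          intro s
          simp only [hydef]
          rw [if_neg hcm.ne', div_pow, pow_mul]
        simp_rw [hyr]
        rw [← Finset.sum_div, div_le_iff₀ (by positivity)]
        calc ∑ s : Fin n → Bool, (S m s)^(2*r)
            ≤ 2^n * (2 * (2*r/e1)^r * (c m)^r) := khintchine r hr (fun i => A m i)
          _ = 2^n * (2 * (2*r/e1)^r) * (c m)^r := by ring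
    calc ∑ s : Fin n → Bool, (rade s ⬝ᵥ M *ᵥ rade s) ^ r
        ≤ ∑ s : Fin n → Bool, T^(r-1) * ∑ m, c m * (y m s)^r :=
          Finset.sum_le_sum (fun s _ => hjen s)
      _ = T^(r-1) * ∑ m, c m * (∑ s : Fin n → Bool, (y m s)^r) := by
          rw [← Finset.mul_sum]
          congr 1
          rw [Finset.sum_comm]
          exact Finset.sum_congr rfl (fun m _ => by rw [Finset.mul_sum])
      _ ≤ T^(r-1) * ∑ m, c m * (2^n * (2 * (2*r/e1)^r)) := by
          apply mul_le_mul_of_nonneg_left (Finset.sum_le_sum (fun m _ => hym m)) (by positivity)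
      _ = T^(r-1) * T * (2^n * (2 * (2*r/e1)^r)) := by
          rw [← Finset.sum_mul, ← hTdef]; ring
      _ = 2^n * (2 * (2*r/e1)^r * T^r) := by
          rw [← pow_succ]
          have : r - 1 + 1 = r := by omega
          rw [this]; ring

lemma psd_quad {n : ℕ} {M : Matrix (Fin n) (Fin n) ℝ} (h : M.PosSemidef)
    (x : Fin n → ℝ) : 0 ≤ x ⬝ᵥ M *ᵥ x := by
  simpa using h.dotProduct_mulVec_nonneg x

lemma psd_diag {n : ℕ} {M : Matrix (Fin n) (Fin n) ℝ} (h : M.PosSemidef)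
    (i : Fin n) : 0 ≤ M i i := by
  have := psd_quad h (Pi.single i 1)
  simpa [Matrix.mulVec, dotProduct, Pi.single_apply, Finset.sum_ite_eq,
    Finset.sum_ite_eq'] using this

lemma dot_symm {n : ℕ} {M : Matrix (Fin n) (Fin n) ℝ} (hsym : ∀ i j, M i j = M j i)
    (x y : Fin n → ℝ) : y ⬝ᵥ M *ᵥ x = x ⬝ᵥ M *ᵥ y := by
  simp only [dotProduct, Matrix.mulVec, Finset.mul_sum]
  rw [Finset.sum_comm]
  exact Finset.sum_congr rfl fun i _ => Finset.sum_congr rfl fun j _ => by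
    rw [hsym j i]; ring

lemma quad_cs {n : ℕ} {M : Matrix (Fin n) (Fin n) ℝ} (hsym : ∀ i j, M i j = M j i)
    (hpos : ∀ x : Fin n → ℝ, 0 ≤ x ⬝ᵥ M *ᵥ x) (x y : Fin n → ℝ) :
    (x ⬝ᵥ M *ᵥ y)^2 ≤ (x ⬝ᵥ M *ᵥ x) * (y ⬝ᵥ M *ᵥ y) := by
  have expand : ∀ t : ℝ, (x + t • y) ⬝ᵥ M *ᵥ (x + t • y)
      = (y ⬝ᵥ M *ᵥ y) * (t*t) + (2*(x ⬝ᵥ M *ᵥ y)) * t + (x ⬝ᵥ M *ᵥ x) := by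
    intro t
    rw [Matrix.mulVec_add, Matrix.mulVec_smul, dotProduct_add, add_dotProduct,
      add_dotProduct, dotProduct_smul, smul_dotProduct, smul_dotProduct,
      dotProduct_smul, dot_symm hsym x y]
    simp only [smul_eq_mul]
    ring
  have hd := discrim_le_zero (a := y ⬝ᵥ M *ᵥ y) (b := 2*(x ⬝ᵥ M *ᵥ y))
    (c := x ⬝ᵥ M *ᵥ x) (fun t => by rw [← expand t]; exact hpos _)
  rw [discrim] at hd
  nlinarith [hd]

lemma num_choice (k : ℕ) (hk : 2 ≤ k) : ∃ r : ℕ, 1 ≤ r ∧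
    (k:ℝ) * (2 * (2*r/Real.exp 1)^r) ≤ (Real.exp 1 ^ 2 * Real.log k)^r := by
  have he1 : (2.7182818283:ℝ) < Real.exp 1 := Real.exp_one_gt_d9
  have hl2 : (0.6931471803:ℝ) < Real.log 2 := Real.log_two_gt_d9
  have he1p : (0:ℝ) < Real.exp 1 := Real.exp_pos 1
  set e1 := Real.exp 1 with he1def
  have hlk : Real.log 2 ≤ Real.log k := by
    apply Real.log_le_log (by norm_num)
    exact_mod_cast hk
  by_cases hk4 : k < 4
  · refine ⟨2, by norm_num, ?_⟩
    have hk3 : (k:ℝ) ≤ 3 := by exact_mod_cast Nat.lt_succ_iff.1 hk4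
    have h1 : (k:ℝ) * (2*(2*(2:ℕ)/e1)^2) = 32*k/e1^2 := by
      push_cast; field_simp; ring
    rw [h1, div_le_iff₀ (by positivity)]
    have h2 : (7:ℝ) ≤ e1^2 := by nlinarith
    have h3 : (e1^2*Real.log k)^2 * e1^2 = (e1^2)^3 * (Real.log k)^2 := by ring
    rw [h3]
    have h4 : (0.69:ℝ)^2 ≤ (Real.log k)^2 := by nlinarith
    have h5 : (7:ℝ)^3 ≤ (e1^2)^3 := pow_le_pow_left₀ (by norm_num) h2 3
    nlinarith [h4, h5]
  · push_neg at hk4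
    set m := Nat.log 2 k with hm
    have hk0 : k ≠ 0 := by omega
    have hm2 : 2 ≤ m := by
      rw [hm]
      exact (Nat.le_log_iff_pow_le (by norm_num) hk0).2 (by norm_num; omega)
    refine ⟨m, by omega, ?_⟩
    have hlow : (2:ℕ)^m ≤ k := Nat.pow_log_le_self 2 hk0
    have hup : k < 2^(m+1) := Nat.lt_pow_succ_log_self (by norm_num) k
    have hkR : (k:ℝ) ≤ 2^(m+1) := by
      have := (Nat.cast_le (α := ℝ)).2 (le_of_lt hup)
      push_cast at this; linarith
    have hlogk : (m:ℝ) * Real.log 2 ≤ Real.log k := by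
      have h := Real.log_le_log (by positivity : (0:ℝ) < 2^m)
        (by exact_mod_cast hlow : ((2:ℝ))^m ≤ k)
      rwa [Real.log_pow] at h
    have hpospow : (0:ℝ) < 2 * (2*m/e1)^m := by positivity
    have step1 : (k:ℝ) * (2 * (2*m/e1)^m) ≤ (2:ℝ)^(m+1) * (2 * (2*m/e1)^m) :=
      mul_le_mul_of_nonneg_right hkR (le_of_lt hpospow)
    have step2 : (2:ℝ)^(m+1) * (2 * (2*m/e1)^m) = 4 * (4*m/e1)^m := by
      rw [show (4*(m:ℝ)/e1) = 2*(2*m/e1) by ring, mul_pow, pow_succ]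
      ring
    have hbeta : (2:ℝ) ≤ e1^3 * Real.log 2 / 4 := by
      have hcube : (20:ℝ) ≤ e1^3 := by
        have h27 : (2.718:ℝ) ≤ e1 := by linarith
        calc (20:ℝ) ≤ 2.718^3 := by norm_num
          _ ≤ e1^3 := pow_le_pow_left₀ (by norm_num) h27 3
      nlinarith
    have step3 : (4:ℝ) * (4*m/e1)^m ≤ (e1^2 * ((m:ℝ) * Real.log 2))^m := by
      have hsplit : (e1^2 * ((m:ℝ) * Real.log 2)) = (4*m/e1) * (e1^3 * Real.log 2/4) := by
        field_simp
      rw [hsplit, mul_pow]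
      have h4m : (0:ℝ) ≤ (4*m/e1)^m := by positivity
      have hb4 : (4:ℝ) ≤ (e1^3 * Real.log 2/4)^m := by
        calc (4:ℝ) = 2^2 := by norm_num
          _ ≤ 2^m := pow_le_pow_right₀ one_le_two hm2
          _ ≤ (e1^3 * Real.log 2/4)^m := pow_le_pow_left₀ (by norm_num) hbeta m
      calc (4:ℝ) * (4*m/e1)^m ≤ (e1^3*Real.log 2/4)^m * (4*m/e1)^m := by
            apply mul_le_mul_of_nonneg_right hb4 h4m
        _ = (4*m/e1)^m * (e1^3*Real.log 2/4)^m := by ring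
    have step4 : (e1^2 * ((m:ℝ) * Real.log 2))^m ≤ (e1^2 * Real.log k)^m := by
      apply pow_le_pow_left₀ (by positivity)
      exact mul_le_mul_of_nonneg_left hlogk (by positivity)
    calc (k:ℝ) * (2 * (2*m/e1)^m) ≤ (2:ℝ)^(m+1) * (2 * (2*m/e1)^m) := step1
      _ = 4 * (4*m/e1)^m := step2
      _ ≤ (e1^2 * ((m:ℝ) * Real.log 2))^m := step3
      _ ≤ (e1^2 * Real.log k)^m := step4

/-- Kernel-learning Rademacher bound (finite-sample form of Theorem 7.1 of the paper):
`G_1, …, G_k` are `n × n` PSD Gram matrices with diagonal entries at most `B`, and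
`𝒱 = {Gα : G = ∑ μ_j G_j, μ ≥ 0, ∑ μ_j = 1, αᵀGα ≤ 1/γ²}`.  The empirical Rademacher
complexity `E_ε [sup_{v ∈ 𝒱} (1/n) ∑ i ε_i v_i]` (expectation over uniform signs written as
a normalized sum over all sign patterns) is at most `e √(B ln k / (γ² n))`. -/
theorem stmt18 (n k : ℕ) (hn : 0 < n) (hk : 2 ≤ k) (B γ : ℝ) (hγ : 0 < γ)
    (G : Fin k → Matrix (Fin n) (Fin n) ℝ)
    (hpsd : ∀ j, (G j).PosSemidef) (hdiag : ∀ (j : Fin k) (i : Fin n), G j i i ≤ B) :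
    (1 / 2 ^ n : ℝ) * ∑ s : Fin n → Bool,
        sSup {r : ℝ | ∃ μ : Fin k → ℝ, (∀ j, 0 ≤ μ j) ∧ (∑ j, μ j) = 1 ∧
          ∃ α : Fin n → ℝ, α ⬝ᵥ ((∑ j, μ j • G j) *ᵥ α) ≤ 1 / γ ^ 2 ∧
            r = (1 / n : ℝ) * ∑ i, (if s i then (1 : ℝ) else -1) *
              ((∑ j, μ j • G j) *ᵥ α) i} ≤
      Real.exp 1 * Real.sqrt (B * Real.log k / (γ ^ 2 * n)) := by
  have he1p : (0:ℝ) < Real.exp 1 := Real.exp_pos 1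
  set e1 := Real.exp 1 with he1def
  have hnR : (0:ℝ) < n := by exact_mod_cast hn
  have hkinh : Nonempty (Fin k) := ⟨⟨0, by omega⟩⟩
  have huniv : (Finset.univ : Finset (Fin k)).Nonempty := Finset.univ_nonempty
  have j0 : Fin k := ⟨0, by omega⟩
  have i0 : Fin n := ⟨0, hn⟩
  have hB : 0 ≤ B := le_trans (psd_diag (hpsd j0) i0) (hdiag j0 i0)
  have hlogk : Real.log 2 ≤ Real.log k :=
    Real.log_le_log (by norm_num) (by exact_mod_cast hk)
  have hlogpos : 0 < Real.log k :=
    lt_of_lt_of_le (Real.log_pos (by norm_num)) hlogk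
  set q : Fin k → (Fin n → Bool) → ℝ := fun j s => rade s ⬝ᵥ (G j) *ᵥ rade s with hqdef
  have hq0 : ∀ j s, 0 ≤ q j s := fun j s => psd_quad (hpsd j) _
  set Q : (Fin n → Bool) → ℝ := fun s => univ.sup' huniv (fun j => q j s) with hQdef
  have hQle : ∀ j s, q j s ≤ Q s := by
    intro j s
    rw [hQdef]
    exact Finset.le_sup' (fun j => q j s) (Finset.mem_univ j)
  have hQ0 : ∀ s, 0 ≤ Q s := fun s => le_trans (hq0 j0 s) (hQle j0 s)
  set D : ℝ := e1^2 * Real.log k * ((n:ℝ)*B) with hD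
  have hD0 : 0 ≤ D := by positivity
  -- Step 1 : pointwise sSup bound
  have key1 : ∀ s : Fin n → Bool,
      sSup {r : ℝ | ∃ μ : Fin k → ℝ, (∀ j, 0 ≤ μ j) ∧ (∑ j, μ j) = 1 ∧
          ∃ α : Fin n → ℝ, α ⬝ᵥ ((∑ j, μ j • G j) *ᵥ α) ≤ 1 / γ ^ 2 ∧
            r = (1 / n : ℝ) * ∑ i, (if s i then (1 : ℝ) else -1) *
              ((∑ j, μ j • G j) *ᵥ α) i}
        ≤ Real.sqrt (Q s) / (γ * n) := by
    intro s
    apply Real.sSup_le _ (by positivity)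
    rintro x ⟨μ, hμ0, hμ1, α, hα, rfl⟩
    set Gμ : Matrix (Fin n) (Fin n) ℝ := ∑ j, μ j • G j with hGμ
    have hGμsym : ∀ i i', Gμ i i' = Gμ i' i := by
      intro i i'
      rw [hGμ]
      simp only [Matrix.sum_apply, Matrix.smul_apply, smul_eq_mul]
      exact Finset.sum_congr rfl fun j _ => by rw [herm_symm (hpsd j).1 i i']
    have hent : ∀ i i', Gμ i i' = ∑ j, μ j * G j i i' := by
      intro i i'
      rw [hGμ]
      simp [Matrix.sum_apply, Matrix.smul_apply, smul_eq_mul]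
    have hexp : ∀ x y : Fin n → ℝ, x ⬝ᵥ Gμ *ᵥ y = ∑ j, μ j * (x ⬝ᵥ (G j) *ᵥ y) := by
      intro x y
      simp only [dotProduct, Matrix.mulVec, hent]
      calc ∑ i, x i * ∑ i', (∑ j, μ j * G j i i') * y i'
          = ∑ i, ∑ i', ∑ j, x i * (μ j * G j i i' * y i') := by
            refine Finset.sum_congr rfl fun i _ => ?_
            rw [Finset.mul_sum]
            refine Finset.sum_congr rfl fun i' _ => ?_
            rw [Finset.sum_mul, Finset.mul_sum]
        _ = ∑ i, ∑ j, ∑ i', x i * (μ j * G j i i' * y i') :=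
            Finset.sum_congr rfl fun i _ => Finset.sum_comm
        _ = ∑ j, ∑ i, ∑ i', x i * (μ j * G j i i' * y i') := Finset.sum_comm
        _ = ∑ j, μ j * ∑ i, x i * ∑ i', G j i i' * y i' := by
            refine Finset.sum_congr rfl fun j _ => ?_
            rw [Finset.mul_sum]
            refine Finset.sum_congr rfl fun i _ => ?_
            rw [Finset.mul_sum, Finset.mul_sum]
            refine Finset.sum_congr rfl fun i' _ => by ring
    have hGμpos : ∀ x : Fin n → ℝ, 0 ≤ x ⬝ᵥ Gμ *ᵥ x := by
      intro x
      rw [hexp x x]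
      exact Finset.sum_nonneg fun j _ => mul_nonneg (hμ0 j) (psd_quad (hpsd j) x)
    have hqμ : rade s ⬝ᵥ Gμ *ᵥ rade s ≤ Q s := by
      rw [hexp (rade s) (rade s)]
      calc ∑ j, μ j * (rade s ⬝ᵥ (G j) *ᵥ rade s)
          ≤ ∑ j, μ j * Q s := Finset.sum_le_sum fun j _ =>
            mul_le_mul_of_nonneg_left (hQle j s) (hμ0 j)
        _ = Q s := by rw [← Finset.sum_mul, hμ1, one_mul]
    set C : ℝ := rade s ⬝ᵥ (Gμ *ᵥ α) with hC
    have hval : (1 / n : ℝ) * ∑ i, (if s i then (1 : ℝ) else -1) * (Gμ *ᵥ α) i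
        = (1/(n:ℝ)) * C := by
      rw [hC]
      congr 1
    have hcs : C^2 ≤ Q s * (1/γ^2) := by
      calc C^2 ≤ (rade s ⬝ᵥ Gμ *ᵥ rade s) * (α ⬝ᵥ Gμ *ᵥ α) :=
            quad_cs hGμsym hGμpos (rade s) α
        _ ≤ Q s * (1/γ^2) :=
            mul_le_mul hqμ hα (hGμpos α) (hQ0 s)
    have hCb : C ≤ Real.sqrt (Q s) / γ := by
      calc C ≤ |C| := le_abs_self C
        _ = Real.sqrt (C^2) := (Real.sqrt_sq_eq_abs C).symm
        _ ≤ Real.sqrt ((Real.sqrt (Q s)/γ)^2) := by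
            apply Real.sqrt_le_sqrt
            rw [div_pow, Real.sq_sqrt (hQ0 s)]
            calc C^2 ≤ Q s * (1/γ^2) := hcs
              _ = Q s / γ^2 := by ring
        _ = Real.sqrt (Q s) / γ := Real.sqrt_sq (by positivity)
    rw [hval]
    calc (1/(n:ℝ)) * C ≤ (1/(n:ℝ)) * (Real.sqrt (Q s) / γ) :=
          mul_le_mul_of_nonneg_left hCb (by positivity)
      _ = Real.sqrt (Q s) / (γ * n) := by
          field_simp
  -- Step 2 : expectation of Q bound
  have key2 : ∑ s : Fin n → Bool, Q s ≤ 2^n * D := by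
    obtain ⟨r, hr1, hnum⟩ := num_choice k hk
    have hrne : r ≠ 0 := by omega
    have htr0 : ∀ j, 0 ≤ (G j).trace := by
      intro j
      rw [Matrix.trace]
      exact Finset.sum_nonneg fun i _ => psd_diag (hpsd j) i
    have htr : ∀ j, (G j).trace ≤ (n:ℝ)*B := by
      intro j
      rw [Matrix.trace]
      calc ∑ i, (G j).diag i ≤ ∑ _i : Fin n, B :=
            Finset.sum_le_sum fun i _ => hdiag j i
        _ = (n:ℝ)*B := by rw [Finset.sum_const, Finset.card_univ, Fintype.card_fin,
              nsmul_eq_mul]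
    have hmom : ∀ j, ∑ s : Fin n → Bool, q j s ^ r
        ≤ 2^n * (2 * (2*r/e1)^r * ((n:ℝ)*B)^r) := by
      intro j
      calc ∑ s : Fin n → Bool, q j s ^ r
          ≤ 2^n * (2 * (2*r/e1)^r * ((G j).trace)^r) := moment_bound r hr1 (hpsd j)
        _ ≤ 2^n * (2 * (2*r/e1)^r * ((n:ℝ)*B)^r) := by
            have := pow_le_pow_left₀ (htr0 j) (htr j) r
            have h2 : (0:ℝ) ≤ 2^n * (2 * (2*r/e1)^r) := by positivity
            calc (2:ℝ)^n * (2 * (2*r/e1)^r * ((G j).trace)^r)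
                = 2^n * (2 * (2*r/e1)^r) * ((G j).trace)^r := by ring
              _ ≤ 2^n * (2 * (2*r/e1)^r) * ((n:ℝ)*B)^r :=
                  mul_le_mul_of_nonneg_left this h2
              _ = 2^n * (2 * (2*r/e1)^r * ((n:ℝ)*B)^r) := by ring
    have hQr : ∀ s, Q s ^ r ≤ ∑ j, q j s ^ r := by
      intro s
      obtain ⟨jm, _, hjm⟩ := Finset.exists_mem_eq_sup' huniv (fun j => q j s)
      rw [hQdef]
      simp only
      rw [hjm]
      exact Finset.single_le_sum (fun j _ => pow_nonneg (hq0 j s) r) (Finset.mem_univ jm)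
    have hcard : ((Finset.univ : Finset (Fin n → Bool)).card : ℝ) = 2^n := by
      rw [Finset.card_univ]
      simp [Fintype.card_fun]
    have hsum1 : (∑ s : Fin n → Bool, Q s)^r ≤ ((2:ℝ)^n)^(r-1) * ∑ s : Fin n → Bool, Q s ^ r := by
      have hpp := pow_sum_div_card_le_sum_pow (f := Q)
        (s := (Finset.univ : Finset (Fin n → Bool))) (fun s _ => hQ0 s) (r-1)
      rw [show r - 1 + 1 = r by omega] at hpp
      rw [div_le_iff₀ (by rw [← hcard] at *; positivity)] at hpp
      calc (∑ s : Fin n → Bool, Q s)^r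
          ≤ (∑ s : Fin n → Bool, Q s ^ r) * (((Finset.univ : Finset (Fin n → Bool)).card : ℝ))^(r-1) := hpp
        _ = ((2:ℝ)^n)^(r-1) * ∑ s : Fin n → Bool, Q s ^ r := by rw [hcard]; ring
    have hsum2 : ∑ s : Fin n → Bool, Q s ^ r
        ≤ (k:ℝ) * (2^n * (2 * (2*r/e1)^r * ((n:ℝ)*B)^r)) := by
      calc ∑ s : Fin n → Bool, Q s ^ r
          ≤ ∑ s : Fin n → Bool, ∑ j, q j s ^ r := Finset.sum_le_sum fun s _ => hQr s
        _ = ∑ j, ∑ s : Fin n → Bool, q j s ^ r := Finset.sum_comm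
        _ ≤ ∑ _j : Fin k, 2^n * (2 * (2*r/e1)^r * ((n:ℝ)*B)^r) :=
            Finset.sum_le_sum fun j _ => hmom j
        _ = (k:ℝ) * (2^n * (2 * (2*r/e1)^r * ((n:ℝ)*B)^r)) := by
            rw [Finset.sum_const, Finset.card_univ, Fintype.card_fin, nsmul_eq_mul]
    have hfinal : (∑ s : Fin n → Bool, Q s)^r ≤ (2^n * D)^r := by
      calc (∑ s : Fin n → Bool, Q s)^r
          ≤ ((2:ℝ)^n)^(r-1) * ((k:ℝ) * (2^n * (2 * (2*r/e1)^r * ((n:ℝ)*B)^r))) := by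
            refine le_trans hsum1 (mul_le_mul_of_nonneg_left hsum2 (by positivity))
        _ = ((2:ℝ)^n)^r * (((k:ℝ) * (2 * (2*r/e1)^r)) * ((n:ℝ)*B)^r) := by
            rw [show ((2:ℝ)^n)^r = ((2:ℝ)^n)^(r-1) * (2:ℝ)^n by
              rw [← pow_succ]; congr 1; omega]
            ring
        _ ≤ ((2:ℝ)^n)^r * ((e1^2 * Real.log k)^r * ((n:ℝ)*B)^r) := by
            apply mul_le_mul_of_nonneg_left _ (by positivity)
            exact mul_le_mul_of_nonneg_right hnum (by positivity)
        _ = (2^n * D)^r := by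
            simp only [hD, mul_pow]
    exact le_of_pow_le_pow_left₀ hrne (by positivity) hfinal
  -- Step 3 : Cauchy-Schwarz for the sqrt
  have key3 : ∑ s : Fin n → Bool, Real.sqrt (Q s) ≤ 2^n * Real.sqrt D := by
    have hcs := Finset.sum_mul_sq_le_sq_mul_sq (Finset.univ : Finset (Fin n → Bool))
      (fun s => Real.sqrt (Q s)) (fun _ => 1)
    simp only [mul_one, one_pow] at hcs
    have h1 : ∑ s : Fin n → Bool, (Real.sqrt (Q s))^2 = ∑ s : Fin n → Bool, Q s :=
      Finset.sum_congr rfl fun s _ => Real.sq_sqrt (hQ0 s)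
    have h2 : ∑ _s : Fin n → Bool, (1:ℝ) = 2^n := by
      rw [Finset.sum_const, Finset.card_univ, nsmul_eq_mul, mul_one]
      simp [Fintype.card_fun]
    rw [h1, h2] at hcs
    have h3 : (∑ s : Fin n → Bool, Real.sqrt (Q s))^2 ≤ (2^n * Real.sqrt D)^2 := by
      calc (∑ s : Fin n → Bool, Real.sqrt (Q s))^2
          ≤ (∑ s : Fin n → Bool, Q s) * 2^n := hcs
        _ ≤ (2^n * D) * 2^n := mul_le_mul_of_nonneg_right key2 (by positivity)
        _ = (2^n * Real.sqrt D)^2 := by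
            rw [mul_pow, Real.sq_sqrt hD0]
            ring
    exact le_of_pow_le_pow_left₀ two_ne_zero (by positivity) h3
  -- Final assembly
  have hRHS : Real.sqrt D / (γ * n) = e1 * Real.sqrt (B * Real.log k / (γ^2 * n)) := by
    have hsqD : Real.sqrt D = e1 * Real.sqrt (Real.log k * ((n:ℝ)*B)) := by
      rw [hD, show e1^2 * Real.log k * ((n:ℝ)*B) = e1^2 * (Real.log k * ((n:ℝ)*B)) by ring,
        Real.sqrt_mul (sq_nonneg e1), Real.sqrt_sq he1p.le]
    have harg : B * Real.log k / (γ^2 * n) = (Real.log k * ((n:ℝ)*B)) / ((γ*n)^2) := by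
      field_simp
    rw [hsqD, harg, Real.sqrt_div (by positivity), Real.sqrt_sq (by positivity)]
    ring
  calc (1 / 2 ^ n : ℝ) * ∑ s : Fin n → Bool, sSup _
      ≤ (1 / 2 ^ n : ℝ) * ∑ s : Fin n → Bool, Real.sqrt (Q s) / (γ * n) := by
        apply mul_le_mul_of_nonneg_left (Finset.sum_le_sum fun s _ => key1 s) (by positivity)
    _ = (1 / 2 ^ n : ℝ) * ((∑ s : Fin n → Bool, Real.sqrt (Q s)) / (γ * n)) := by
        rw [← Finset.sum_div]
    _ ≤ (1 / 2 ^ n : ℝ) * ((2^n * Real.sqrt D) / (γ * n)) := by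
        apply mul_le_mul_of_nonneg_left _ (by positivity)
        apply div_le_div_of_nonneg_right key3 (by positivity)
    _ = Real.sqrt D / (γ * n) := by
        field_simp
    _ = e1 * Real.sqrt (B * Real.log k / (γ^2 * n)) := hRHS
end
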